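/- arXiv:1705.06423 — 2 statements merged into one kernel-verified Lean document; each statement's English description precedes it below -/
import Mathlib

section
/- Let Q be any subposet (a subset with the induced order) of the poset P_0 that contains at least two chains of length 3 (that is, two four-element chains), one of which contains a or b and another of which contains a′ or b′. Then Q is not shellable, i.e., the order complex Δ(Q) is not shellable. -/
open Classical

set_option maxHeartbeats 1000000

/-- A finite multigraph without loops: `fst e` and `snd e` are the two (distinct)
endpoints of the edge `e`. -/
structure Multigraph where
  V : Type
  E : Type
  [fintypeV : Fintype V]
  [decEqV : DecidableEq V]
  [fintypeE : Fintype E]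
  [decEqE : DecidableEq E]
  fst : E → V
  snd : E → V
  no_loop : ∀ e, fst e ≠ snd e

attribute [instance] Multigraph.fintypeV Multigraph.decEqV Multigraph.fintypeE Multigraph.decEqE

namespace Multigraph

variable (G : Multigraph)

/-- The ground set: vertices together with edges. -/
abbrev El : Type := G.V ⊕ G.E

/-- Two edges have the same (unordered) pair of endpoints. -/
def sameEnds (e e' : G.E) : Prop :=
  (G.fst e = G.fst e' ∧ G.snd e = G.snd e') ∨ (G.fst e = G.snd e' ∧ G.snd e = G.fst e')

/-- An edge is a multiple edge if some other edge has the same endpoints. -/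
def Multiple (e : G.E) : Prop := ∃ e', e' ≠ e ∧ G.sameEnds e e'

/-- A simple graph has no multiple edges. -/
def Simple : Prop := ∀ e, ¬ G.Multiple e

/-- A bundle: a maximal set of multiple edges with the same pair of endpoints. -/
def IsBundle (B : Set G.E) : Prop := ∃ e, G.Multiple e ∧ B = {e' | G.sameEnds e e'}

/-- Adjacency of vertices. -/
def adj (u v : G.V) : Prop :=
  ∃ e, (G.fst e = u ∧ G.snd e = v) ∨ (G.fst e = v ∧ G.snd e = u)

def reachable : G.V → G.V → Prop := Relation.ReflTransGen G.adj

def Connected : Prop := Nonempty G.V ∧ ∀ u v : G.V, G.reachable u v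

/-- Existence of a walk of length exactly `k`. -/
def reachN (G : Multigraph) : ℕ → G.V → G.V → Prop
  | 0, u, v => u = v
  | k + 1, u, v => ∃ w, G.adj u w ∧ G.reachN k w v

/-- Graph distance. -/
noncomputable def dist (u v : G.V) : ℕ := sInf {k | G.reachN k u v}

def adjOn (W : Set G.V) (u v : G.V) : Prop := u ∈ W ∧ v ∈ W ∧ G.adj u v

/-- The set `W` of vertices induces a connected subgraph. -/
def ConnectedOn (W : Set G.V) : Prop :=
  ∀ u ∈ W, ∀ w ∈ W, Relation.ReflTransGen (G.adjOn W) u w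

/-- The subset of the ground set representing the whole graph:
all vertices together with all multiple edges. -/
def topSet : Set G.El := {x | ∀ e, x = Sum.inr e → G.Multiple e}

/-- `S ⊆ C_G` represents a semi-induced subgraph: its edges are multiple edges with both
endpoints among its vertices, and between any two of its vertices joined by a bundle of `G`
it contains at least one edge of the bundle (simple edges are implicitly included). -/
def SemiInduced (S : Set G.El) : Prop :=
  (∀ e, Sum.inr e ∈ S → G.Multiple e ∧ Sum.inl (G.fst e) ∈ S ∧ Sum.inl (G.snd e) ∈ S) ∧
  (∀ e, G.Multiple e → Sum.inl (G.fst e) ∈ S → Sum.inl (G.snd e) ∈ S →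
    ∃ e', G.sameEnds e e' ∧ Sum.inr e' ∈ S)

/-- Adjacency of two vertices inside the semi-induced subgraph represented by `S`. -/
def adjIn (S : Set G.El) (u v : G.V) : Prop :=
  Sum.inl u ∈ S ∧ Sum.inl v ∈ S ∧
    ∃ e, ((G.fst e = u ∧ G.snd e = v) ∨ (G.fst e = v ∧ G.snd e = u)) ∧
      (G.Multiple e → Sum.inr e ∈ S)

/-- The connected component of the vertex `v` inside the semi-induced subgraph `S`,
as a subset of the ground set. -/
def componentIn (S : Set G.El) (v : G.V) : Set G.El :=
  {x | (∃ u, x = Sum.inl u ∧ Relation.ReflTransGen (G.adjIn S) v u) ∨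
       (∃ e, x = Sum.inr e ∧ Sum.inr e ∈ S ∧ Relation.ReflTransGen (G.adjIn S) v (G.fst e))}

/-- `S` is an `A`-even semi-induced subgraph. -/
def AEvenMember (A S : Set G.El) : Prop :=
  G.SemiInduced S ∧ ∀ v, Sum.inl v ∈ S → Even ((G.componentIn S v ∩ A).ncard)

/-- `A` is an admissible collection for `G`. -/
def Admissible (A : Set G.El) : Prop :=
  (∀ e, Sum.inr e ∈ A → G.Multiple e) ∧
  (∀ v : G.V, Even ({u : G.V | G.reachable v u ∧ Sum.inl u ∈ A}.ncard)) ∧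
  (∀ v : G.V, (∀ e, (G.fst e = v ∨ G.snd e = v) → ¬ G.Multiple e) → Sum.inl v ∈ A) ∧
  (∀ e, G.Multiple e →
    (∃ e', G.sameEnds e e' ∧ Sum.inr e' ∈ A) ∧
      Even ({e' | G.sameEnds e e' ∧ Sum.inr e' ∈ A}.ncard))

end Multigraph

/-- The poset of `A`-even semi-induced subgraphs of `G`, including `∅` and `G` itself,
ordered by containment. -/
def EvenPoset (G : Multigraph) (A : Set G.El) : Type :=
  {S : Set G.El // S = ∅ ∨ S = G.topSet ∨ G.AEvenMember A S}

namespace EvenPoset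

instance (G : Multigraph) (A : Set G.El) : PartialOrder (EvenPoset G A) :=
  Subtype.partialOrder _

instance (G : Multigraph) (A : Set G.El) : BoundedOrder (EvenPoset G A) where
  top := ⟨G.topSet, Or.inr (Or.inl rfl)⟩
  le_top := by
    rintro ⟨S, hS⟩
    show S ⊆ G.topSet
    rcases hS with rfl | rfl | hS
    · exact Set.empty_subset _
    · exact subset_rfl
    · intro x hx
      intro e he
      subst he
      exact (hS.1.1 e hx).1
  bot := ⟨(∅ : Set G.El), Or.inl rfl⟩
  bot_le := by
    rintro ⟨S, hS⟩
    show (∅ : Set G.El) ⊆ S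
    exact Set.empty_subset _

end EvenPoset
/-- An isomorphism of multigraphs. -/
structure Multigraph.Iso (G H : Multigraph) where
  vEquiv : G.V ≃ H.V
  eEquiv : G.E ≃ H.E
  ends : ∀ e, (H.fst (eEquiv e) = vEquiv (G.fst e) ∧ H.snd (eEquiv e) = vEquiv (G.snd e)) ∨
              (H.fst (eEquiv e) = vEquiv (G.snd e) ∧ H.snd (eEquiv e) = vEquiv (G.fst e))

/-- The connected component of the vertex `v`, as a multigraph. -/
noncomputable def Multigraph.componentGraph (G : Multigraph) (v : G.V) : Multigraph where
  V := {u // G.reachable v u}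
  E := {e // G.reachable v (G.fst e)}
  fintypeV := Fintype.ofFinite _
  decEqV := fun a b => decidable_of_iff (a.1 = b.1) Subtype.ext_iff.symm
  fintypeE := Fintype.ofFinite _
  decEqE := fun a b => decidable_of_iff (a.1 = b.1) Subtype.ext_iff.symm
  fst := fun e => ⟨G.fst e.1, e.2⟩
  snd := fun e => ⟨G.snd e.1, Relation.ReflTransGen.tail e.2 ⟨e.1, Or.inl ⟨rfl, rfl⟩⟩⟩
  no_loop := fun e h => G.no_loop e.1 (congrArg Subtype.val h)

/-- A specification of a partial underlying induced subgraph (PI-graph) of `G`: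
a set `W` of vertices together with a set `R` of retained edges, such that every `G`-edge
between vertices of `W` has a parallel retained edge, and each bundle inside `W`
is either fully retained or replaced by a single (simple) edge. -/
structure PISpec (G : Multigraph) where
  W : Set G.V
  R : Set G.E
  endpoints_mem : ∀ e ∈ R, G.fst e ∈ W ∧ G.snd e ∈ W
  keeps : ∀ e, G.fst e ∈ W → G.snd e ∈ W → ∃ e' ∈ R, G.sameEnds e e'
  bundle_cond : ∀ e ∈ R, (∀ e', G.sameEnds e e' → e' ∈ R) ∨ (∀ e' ∈ R, G.sameEnds e e' → e' = e)

/-- The PI-graph determined by a `PISpec`. -/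
noncomputable def PISpec.toGraph {G : Multigraph} (s : PISpec G) : Multigraph where
  V := {v // v ∈ s.W}
  E := {e // e ∈ s.R}
  fintypeV := Fintype.ofFinite _
  decEqV := fun a b => decidable_of_iff (a.1 = b.1) Subtype.ext_iff.symm
  fintypeE := Fintype.ofFinite _
  decEqE := fun a b => decidable_of_iff (a.1 = b.1) Subtype.ext_iff.symm
  fst := fun e => ⟨G.fst e.1, (s.endpoints_mem e.1 e.2).1⟩
  snd := fun e => ⟨G.snd e.1, (s.endpoints_mem e.1 e.2).2⟩
  no_loop := fun e h => G.no_loop e.1 (congrArg Subtype.val h)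

section Shelling

variable {α : Type*}

/-- A finset is a chain of the poset. -/
def IsChainFinset [Preorder α] (s : Finset α) : Prop :=
  ∀ x ∈ s, ∀ y ∈ s, x ≤ y ∨ y ≤ x

/-- The order complex of a poset: the complex of its chains. -/
def orderComplex (α : Type*) [Preorder α] : Set (Finset α) := {s | IsChainFinset s}

/-- A facet (maximal face) of a simplicial complex. -/
def IsFacet (K : Set (Finset α)) (F : Finset α) : Prop :=
  F ∈ K ∧ ∀ F' ∈ K, F ⊆ F' → F = F'

/-- `l` is a shelling order of the complex `K` (nonpure shellability of Björner–Wachs):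
it enumerates the facets of `K` so that for every `k ≥ 1`, the intersection of the `k`-th
facet with the union of the earlier ones is pure of dimension `dim F_k - 1`. -/
def IsShelling (K : Set (Finset α)) (l : List (Finset α)) : Prop :=
  l.Nodup ∧ (∀ F, F ∈ l ↔ IsFacet K F) ∧
  ∀ k (hk : k < l.length), 1 ≤ k →
    ∀ S : Finset α, S ⊆ l.get ⟨k, hk⟩ →
      (∃ i, ∃ hi : i < l.length, i < k ∧ S ⊆ l.get ⟨i, hi⟩) →
      ∃ T : Finset α, T ⊆ l.get ⟨k, hk⟩ ∧ T.card + 1 = (l.get ⟨k, hk⟩).card ∧ S ⊆ T ∧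
        ∃ i, ∃ hi : i < l.length, i < k ∧ T ⊆ l.get ⟨i, hi⟩

def ComplexShellable (K : Set (Finset α)) : Prop := ∃ l, IsShelling K l

/-- A poset is shellable if its order complex is shellable. -/
def PosetShellable (α : Type*) [Preorder α] : Prop := ComplexShellable (orderComplex α)

end Shelling

/-- The family `𝒢*`: all graphs `G` such that the poset of `A`-even subgraphs is shellable
for every PI-graph `H` of `G` and every admissible collection `A` of `H`. -/
def GStar (G : Multigraph) : Prop :=
  ∀ s : PISpec G, ∀ A : Set s.toGraph.El,
    s.toGraph.Admissible A → PosetShellable (EvenPoset s.toGraph A)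
/-- A graph on vertex set `Fin n` with a bundle of `m` parallel edges between the
vertices `0` and `1`, and `k` further simple edges given by the endpoint functions `f, g`. -/
def mkGraph (n m k : ℕ) (hn : 2 ≤ n) (f g : ℕ → ℕ)
    (hf : ∀ i, i < k → f i < n) (hg : ∀ i, i < k → g i < n)
    (hfg : ∀ i, i < k → f i ≠ g i) : Multigraph where
  V := Fin n
  E := Fin m ⊕ Fin k
  fst := Sum.elim (fun _ => ⟨0, by omega⟩) (fun i => ⟨f i.1, hf i.1 i.2⟩)
  snd := Sum.elim (fun _ => ⟨1, by omega⟩) (fun i => ⟨g i.1, hg i.1 i.2⟩)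
  no_loop := by
    rintro (e | e) h
    · have h0 : (0 : ℕ) = 1 := congrArg Fin.val h
      omega
    · exact hfg e.1 e.2 (congrArg Fin.val h)

/-- `P̃_{n+2,m}`: the path on `n+2` vertices `0,1,…,n+1` whose first edge is replaced by a
bundle of `m` parallel edges between `0` and `1`. -/
def tildeP (n m : ℕ) : Multigraph :=
  mkGraph (n + 2) m n (by omega) (fun i => i + 1) (fun i => i + 2)
    (fun i hi => by (try dsimp only); omega) (fun i hi => by (try dsimp only); omega) (fun i hi => by (try dsimp only); omega)

/-- `P̃′_{n+3,m}`: `P̃_{n+3,m}` with an extra simple edge `u₁u₃` (i.e. between `0` and `2`). -/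
def tildeP' (n m : ℕ) : Multigraph :=
  mkGraph (n + 3) m (n + 2) (by omega)
    (fun i => if i ≤ n then i + 1 else 0)
    (fun i => if i ≤ n then i + 2 else 2)
    (fun i hi => by (try dsimp only); split_ifs <;> omega)
    (fun i hi => by (try dsimp only); split_ifs <;> omega)
    (fun i hi => by (try dsimp only); split_ifs <;> omega)

/-- `S̃_{2j+5,m}`: the bundle `0,1`, the path `1,2,…,2j+3`, and a pendant vertex `2j+4`
attached to `2j+2`. -/
def tildeS (j m : ℕ) : Multigraph :=
  mkGraph (2*j + 5) m (2*j + 3) (by omega)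
    (fun i => if i < 2*j + 2 then i + 1 else 2*j + 2)
    (fun i => if i < 2*j + 2 then i + 2 else 2*j + 4)
    (fun i hi => by (try dsimp only); split_ifs <;> omega)
    (fun i hi => by (try dsimp only); split_ifs <;> omega)
    (fun i hi => by (try dsimp only); split_ifs <;> omega)

/-- `T̃_{2j+5,m}`: `S̃_{2j+5,m}` with the extra edge between `2j+3` and `2j+4`. -/
def tildeT (j m : ℕ) : Multigraph :=
  mkGraph (2*j + 5) m (2*j + 4) (by omega)
    (fun i => if i < 2*j + 2 then i + 1 else if i = 2*j + 2 then 2*j + 2 else 2*j + 3)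
    (fun i => if i < 2*j + 2 then i + 2 else 2*j + 4)
    (fun i hi => by (try dsimp only); split_ifs <;> omega)
    (fun i hi => by (try dsimp only); split_ifs <;> omega)
    (fun i hi => by (try dsimp only); split_ifs <;> omega)

/-- `S̃′_{2j+5,m}`: `S̃_{2j+5,m}` with an extra simple edge between `0` and `2`. -/
def tildeS' (j m : ℕ) : Multigraph :=
  mkGraph (2*j + 5) m (2*j + 4) (by omega)
    (fun i => if i < 2*j + 2 then i + 1 else if i = 2*j + 2 then 2*j + 2 else 0)
    (fun i => if i < 2*j + 2 then i + 2 else if i = 2*j + 2 then 2*j + 4 else 2)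
    (fun i hi => by (try dsimp only); split_ifs <;> omega)
    (fun i hi => by (try dsimp only); split_ifs <;> omega)
    (fun i hi => by (try dsimp only); split_ifs <;> omega)

/-- `T̃′_{2j+5,m}`: `T̃_{2j+5,m}` with an extra simple edge between `0` and `2`. -/
def tildeT' (j m : ℕ) : Multigraph :=
  mkGraph (2*j + 5) m (2*j + 5) (by omega)
    (fun i => if i < 2*j + 2 then i + 1 else if i = 2*j + 2 then 2*j + 2 else
      if i = 2*j + 3 then 2*j + 3 else 0)
    (fun i => if i < 2*j + 2 then i + 2 else if i ≤ 2*j + 3 then 2*j + 4 else 2)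
    (fun i hi => by (try dsimp only); split_ifs <;> omega)
    (fun i hi => by (try dsimp only); split_ifs <;> omega)
    (fun i hi => by (try dsimp only); split_ifs <;> omega)

/-- `G` is isomorphic to one of the unprimed graphs `P̃`, `S̃`, `T̃` of the list `L`. -/
def InL0 (G : Multigraph) : Prop :=
  ∃ m, 2 ≤ m ∧
    ((∃ n, Nonempty (G.Iso (tildeP n m))) ∨ (∃ j, Nonempty (G.Iso (tildeS j m))) ∨
      (∃ j, Nonempty (G.Iso (tildeT j m))))

/-- `G` is isomorphic to one of the primed graphs `P̃′`, `S̃′`, `T̃′` of the list `L`. -/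
def InL1 (G : Multigraph) : Prop :=
  ∃ m, 2 ≤ m ∧
    ((∃ n, Nonempty (G.Iso (tildeP' n m))) ∨ (∃ j, Nonempty (G.Iso (tildeS' j m))) ∨
      (∃ j, Nonempty (G.Iso (tildeT' j m))))

/-- `G` is isomorphic to one of the graphs of the list `L`. -/
def InListL (G : Multigraph) : Prop := InL0 G ∨ InL1 G
section CL

variable (P : Type*) [PartialOrder P]

/-- `c` is a saturated chain from `x` to `y`: consecutive elements are covers. -/
def SatChain (x y : P) (c : List P) : Prop :=
  c.Chain' (· ⋖ ·) ∧ c.head? = some x ∧ c.getLast? = some y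

variable [BoundedOrder P]

/-- A maximal chain of the bounded poset `P`. -/
def MaxChain : Type _ := {c : List P // SatChain P ⊥ ⊤ c}

variable {P}

/-- The maximal chain `σ` extends the root `r` (a saturated chain from `⊥` to some `x`)
followed by the saturated chain `c` (from `x` to some `y`). -/
def ChainExtends (σ : MaxChain P) (r c : List P) : Prop := (r ++ c.tail) <+: σ.1

/-- A chain-edge labeling: two maximal chains that coincide along their bottom `d` covers
receive the same labels on those covers. `lab σ i` is the label of the `i`-th cover
of the maximal chain `σ`. -/
def IsChainEdgeLabeling {L : Type} [PartialOrder L] (lab : MaxChain P → ℕ → L) : Prop :=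
  ∀ σ τ : MaxChain P, ∀ d : ℕ, σ.1.take (d + 1) = τ.1.take (d + 1) →
    ∀ i, i < d → lab σ i = lab τ i

/-- The chain `c` of the interval rooted at `r` is strictly increasing with respect
to the labeling `lab`. -/
def SegIncreasing {L : Type} [PartialOrder L] (lab : MaxChain P → ℕ → L)
    (r c : List P) : Prop :=
  ∃ σ : MaxChain P, ChainExtends σ r c ∧
    ∀ i, r.length ≤ i + 1 → i + 4 ≤ r.length + c.length → lab σ i < lab σ (i + 1)

/-- The sequence of labels of the covers of the chain `c` in the interval rooted at `r`,
read off along the extending maximal chain `σ`. -/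
def SegLabels {L : Type} (lab : MaxChain P → ℕ → L) (σ : MaxChain P)
    (r c : List P) : List L :=
  (List.range (c.length - 1)).map fun i => lab σ (r.length - 1 + i)

/-- A CL-labeling: a chain-edge labeling such that in every rooted interval there is a
unique strictly increasing maximal chain, and it lexicographically precedes all other
maximal chains of the rooted interval. -/
def IsCLLabeling {L : Type} [PartialOrder L] (lab : MaxChain P → ℕ → L) : Prop :=
  IsChainEdgeLabeling lab ∧
  ∀ x y : P, x ≤ y → ∀ r : List P, SatChain P ⊥ x r →
    ∃ c : List P, SatChain P x y c ∧ SegIncreasing lab r c ∧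
      ∀ c' : List P, SatChain P x y c' → c' ≠ c →
        ¬ SegIncreasing lab r c' ∧
        ∀ σ σ' : MaxChain P, ChainExtends σ r c → ChainExtends σ' r c' →
          List.Lex (· < ·) (SegLabels lab σ r c) (SegLabels lab σ' r c')

/-- A bounded poset is CL-shellable if it admits a CL-labeling. -/
def CLShellable (P : Type*) [PartialOrder P] [BoundedOrder P] : Prop :=
  ∃ (L : Type) (_ : LinearOrder L) (lab : MaxChain P → ℕ → L), IsCLLabeling lab

end CL

/-- `IntervalRAO x y l`: the list `l` is a recursive atom ordering of the interval `[x,y]`. -/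
inductive IntervalRAO {P : Type*} [PartialOrder P] : P → P → List P → Prop where
  | base : ∀ {x y : P}, x ⋖ y → IntervalRAO x y [y]
  | step : ∀ {x y : P} (l : List P) (ls : ℕ → List P), x < y → ¬ x ⋖ y → l.Nodup →
      (∀ z, z ∈ l ↔ (x ⋖ z ∧ z ≤ y)) →
      (∀ j, ∀ hj : j < l.length, IntervalRAO (l.get ⟨j, hj⟩) y (ls j)) →
      (∀ j, j < l.length →
        ∃ d, ∀ k, ∀ hk : k < (ls j).length,
          (k < d ↔ ∃ i, ∃ hi : i < l.length, i < j ∧ l.get ⟨i, hi⟩ ≤ (ls j).get ⟨k, hk⟩)) →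
      (∀ i j, ∀ hi : i < l.length, ∀ hj : j < l.length, i < j →
        ∀ w, l.get ⟨i, hi⟩ ≤ w → l.get ⟨j, hj⟩ ≤ w → w ≤ y →
          ∃ k, k < j ∧ ∃ hk : k < l.length, ∃ z, l.get ⟨j, hj⟩ ⋖ z ∧ z ≤ w ∧
            l.get ⟨k, hk⟩ < z) →
      IntervalRAO x y l

/-- A bounded poset admits a recursive atom ordering. -/
def HasRAO (P : Type*) [PartialOrder P] [BoundedOrder P] : Prop :=
  ∃ l : List P, IntervalRAO (⊥ : P) ⊤ l
/-- The standard labeling convention for a graph `G` of the list `L` together with an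
admissible collection `A`: the vertices are `v 1, …, v n` with the bundle between
`v 1` and `v 2`, the elements of `B ∩ A` are `ea 1, …, ea twoM`, the elements of
`B ∖ A` are `eb 1, …, eb ell`, each vertex `v i` (`i ≥ 3`) is closest to `v (i-1)`,
`v 1 ∉ A` when `n` is odd, and `v 1` is adjacent to `v 3` when `n` is even. -/
structure StdLabeling (G : Multigraph) (A : Set G.El) where
  n : ℕ
  twoM : ℕ
  ell : ℕ
  hn : 2 ≤ n
  v : ℕ → G.V
  ea : ℕ → G.E
  eb : ℕ → G.E
  vbij : Set.BijOn v (Set.Icc 1 n) Set.univ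
  eabij : Set.BijOn ea (Set.Icc 1 twoM) {e | G.Multiple e ∧ Sum.inr e ∈ A}
  ebbij : Set.BijOn eb (Set.Icc 1 ell) {e | G.Multiple e ∧ Sum.inr e ∉ A}
  bundleEnds : ∀ e, G.Multiple e ↔
    ((G.fst e = v 1 ∧ G.snd e = v 2) ∨ (G.fst e = v 2 ∧ G.snd e = v 1))
  closest : ∀ i, 3 ≤ i → i ≤ n → ∀ j, i ≤ j → j ≤ n →
    G.dist (v (i - 1)) (v i) ≤ G.dist (v (i - 1)) (v j)
  oddA : Odd n → Sum.inl (v 1) ∉ A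
  evenAdj : Even n → 3 ≤ n → G.adj (v 1) (v 3)

namespace StdLabeling

variable {G : Multigraph} {A : Set G.El} (L : StdLabeling G A)

/-- The label of a vertex. -/
noncomputable def vIdx (w : G.V) : ℕ := sInf {i | 1 ≤ i ∧ i ≤ L.n ∧ L.v i = w}

/-- The index of an edge of `B ∩ A`. -/
noncomputable def aIdx (e : G.E) : ℕ := sInf {i | 1 ≤ i ∧ i ≤ L.twoM ∧ L.ea i = e}

/-- The index of an edge of `B ∖ A`. -/
noncomputable def bIdx (e : G.E) : ℕ := sInf {i | 1 ≤ i ∧ i ≤ L.ell ∧ L.eb i = e}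

/-- The rank of a ground element in the total order `≺_I` on `V ∪ B`. -/
noncomputable def rank (I : Set G.El) : G.El → ℕ :=
  if ∀ e : G.E, Sum.inr e ∉ I then
    Sum.elim (fun w => L.vIdx w)
      (fun e => if Sum.inr e ∈ A then L.n + L.aIdx e else L.n + L.twoM + L.bIdx e)
  else if ∀ e : G.E, Sum.inr e ∈ I → Sum.inr e ∈ A then
    Sum.elim
      (fun w => if L.vIdx w ≤ 2 then L.vIdx w
        else sSup {i | 1 ≤ i ∧ i ≤ L.twoM ∧ Sum.inr (L.ea i) ∈ I} + L.vIdx w)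
      (fun e => if Sum.inr e ∈ A then
          (if L.aIdx e ≤ sSup {i | 1 ≤ i ∧ i ≤ L.twoM ∧ Sum.inr (L.ea i) ∈ I}
            then 2 + L.aIdx e else L.n + L.aIdx e)
        else L.n + L.twoM + L.bIdx e)
  else
    Sum.elim
      (fun w => if L.vIdx w ≤ 2 then L.vIdx w
        else L.twoM + sSup {i | 1 ≤ i ∧ i ≤ L.ell ∧ Sum.inr (L.eb i) ∈ I} + L.vIdx w)
      (fun e => if Sum.inr e ∈ A then 2 + L.aIdx e
        else (if L.bIdx e ≤ sSup {i | 1 ≤ i ∧ i ≤ L.ell ∧ Sum.inr (L.eb i) ∈ I}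
          then 2 + L.twoM + L.bIdx e else L.n + L.twoM + L.bIdx e))

end StdLabeling

/-- The set `S` lexicographically precedes the set `T`, comparing the sorted sequences of
ranks of their elements. -/
noncomputable def setLex {G : Multigraph} (f : G.El → ℕ) (S T : Set G.El) : Prop :=
  List.Lex (· < ·)
    (Finset.sort (Finset.image f (Set.toFinite S).toFinset) (· ≤ ·))
    (Finset.sort (Finset.image f (Set.toFinite T).toFinset) (· ≤ ·))

namespace StdLabeling

variable {G : Multigraph} {A : Set G.El} (L : StdLabeling G A)

/-- The pair of endpoints of the bundle, as ground-set elements. -/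
def v12set : Set G.El := {Sum.inl (L.v 1), Sum.inl (L.v 2)}

/-- The atom ordering `J ≺_atom^I J'` of the atoms of the interval `[I, G]`. -/
noncomputable def atomPrec (I J J' : EvenPoset G A) : Prop :=
  (((J.1 \ I.1) ∩ L.v12set).ncard = 1 ∧ ((J'.1 \ I.1) ∩ L.v12set).ncard = 2) ∨
    setLex (L.rank I.1) (J.1 \ I.1) (J'.1 \ I.1)

/-- `c` is a falling maximal chain of the poset of `A`-even subgraphs, with respect to the
integer CL-labeling obtained from the recursive atom orderings `≺_atom` by the standard
Björner–Wachs construction: a maximal chain is falling iff each element `x_{t+1}` of the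
chain lies above an atom of `[x_{t-1}, ⊤]` that precedes `x_t` in `≺_atom^{x_{t-1}}`. -/
noncomputable def Falling (c : List (EvenPoset G A)) : Prop :=
  SatChain (EvenPoset G A) ⊥ ⊤ c ∧
  ∀ t, ∀ _ : 1 ≤ t, ∀ h2 : t + 1 < c.length,
    ∃ z : EvenPoset G A,
      c.get ⟨t - 1, by omega⟩ ⋖ z ∧
      L.atomPrec (c.get ⟨t - 1, by omega⟩) z (c.get ⟨t, by omega⟩) ∧
      z ≤ c.get ⟨t + 1, h2⟩

end StdLabeling
/-- `e` is an element of `B ∩ A` (a multiple edge belonging to `A`). -/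
def Multigraph.inBA (G : Multigraph) (A : Set G.El) (e : G.E) : Prop :=
  G.Multiple e ∧ Sum.inr e ∈ A

/-- `e` is an element of `B ∖ A` (a multiple edge not belonging to `A`). -/
def Multigraph.inBnA (G : Multigraph) (A : Set G.El) (e : G.E) : Prop :=
  G.Multiple e ∧ Sum.inr e ∉ A

/-- `i` is the index of the smallest-labelled vertex outside `I ∪ {v 1, v 2}`,
i.e. `v i = min (V ∖ (I ∪ {1,2}))`. -/
def StdLabeling.vminP {G : Multigraph} {A : Set G.El} (L : StdLabeling G A)
    (I : Set G.El) (i : ℕ) : Prop :=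
  3 ≤ i ∧ i ≤ L.n ∧ Sum.inl (L.v i) ∉ I ∧ ∀ j, 3 ≤ j → j < i → Sum.inl (L.v j) ∈ I

/-- The underlying set of the poset `P₀`. -/
def P0 : Type := Fin 12

instance : Fintype P0 := inferInstanceAs (Fintype (Fin 12))
instance : DecidableEq P0 := inferInstanceAs (DecidableEq (Fin 12))

/-- The elements of `P₀`, numbered
`0 = 0̂, 1 = a, 2 = b, 3 = a′, 4 = b′, 5 = c, 6 = d, 7 = c′, 8 = d′, 9 = e, 10 = e′, 11 = 1̂`. -/
def P0.el (i : Fin 12) : P0 := i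

/-- The order relation of `P₀`, encoding exactly the cover relations
`0̂⋖a,b,a′,b′,e,e′`, `a,b⋖c,d`, `a′,b′⋖c′,d′`, `c,d,c′,d′,e,e′⋖1̂`. -/
def p0le (x y : Fin 12) : Prop :=
  x = y ∨ x = 0 ∨ y = 11 ∨ ((x = 1 ∨ x = 2) ∧ (y = 5 ∨ y = 6)) ∨
    ((x = 3 ∨ x = 4) ∧ (y = 7 ∨ y = 8))

instance (x y : Fin 12) : Decidable (p0le x y) := by unfold p0le; infer_instance

lemma p0le_trans : ∀ a b c : Fin 12, p0le a b → p0le b c → p0le a c := by decide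

lemma p0le_antisymm : ∀ a b : Fin 12, p0le a b → p0le b a → a = b := by decide

instance : PartialOrder P0 where
  le x y := p0le x y
  le_refl x := Or.inl rfl
  le_trans a b c := p0le_trans a b c
  le_antisymm a b := p0le_antisymm a b


def rk : Fin 12 → Fin 4 := ![0,1,1,1,1,2,2,2,2,1,1,3]
lemma rk_comp_inj : ∀ a b : Fin 12, (p0le a b ∨ p0le b a) → rk a = rk b → a = b := by decide
lemma p0le_bot : ∀ z : Fin 12, p0le 0 z := fun z => Or.inr (Or.inl rfl)
lemma p0le_top : ∀ z : Fin 12, p0le z 11 := fun z => Or.inr (Or.inr (Or.inl rfl))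
lemma rk0 : ∀ z : Fin 12, rk z = 0 → z = 0 := by decide
lemma rk3 : ∀ z : Fin 12, rk z = 3 → z = 11 := by decide
lemma rk2A : ∀ z x : Fin 12, rk z = 2 → (x = 1 ∨ x = 2) → (p0le z x ∨ p0le x z) → z = 5 ∨ z = 6 := by decide
lemma rk2B : ∀ z x : Fin 12, rk z = 2 → (x = 3 ∨ x = 4) → (p0le z x ∨ p0le x z) → z = 7 ∨ z = 8 := by decide
lemma incompAB : ∀ a b : Fin 12,
    (a ∈ ({1,2}:Finset (Fin 12)) ∨ a ∈ ({5,6}:Finset (Fin 12))) →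
    (b ∈ ({3,4}:Finset (Fin 12)) ∨ b ∈ ({7,8}:Finset (Fin 12))) →
    ¬(p0le a b ∨ p0le b a) := by decide
lemma D1B : ∀ u z : Fin 12, (u ∈ ({3,4}:Finset (Fin 12)) ∨ u ∈ ({7,8}:Finset (Fin 12))) →
    (p0le u z ∨ p0le z u) →
    (z ∈ ({3,4}:Finset (Fin 12)) ∨ z ∈ ({7,8}:Finset (Fin 12)) ∨ z = 0 ∨ z = 11) := by decide
lemma D2B : ∀ u z : Fin 12, u ∈ ({3,4}:Finset (Fin 12)) → z ∈ ({3,4}:Finset (Fin 12)) →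
    (p0le u z ∨ p0le z u) → u = z := by decide
lemma D4B : ∀ u z : Fin 12, u ∈ ({3,4}:Finset (Fin 12)) → z ∈ ({7,8}:Finset (Fin 12)) → p0le u z := by decide


section Core
variable {Q : Set P0}

lemma chain_card_le (s : Finset P0)
    (h : ∀ x ∈ s, ∀ y ∈ s, p0le x y ∨ p0le y x) : s.card ≤ 4 := by
  have himg : (s.image rk).card = s.card :=
    Finset.card_image_of_injOn (fun a ha b hb hab => rk_comp_inj a b (h a ha b hb) hab)
  calc s.card = (s.image rk).card := himg.symm
    _ ≤ (Finset.univ : Finset (Fin 4)).card := Finset.card_le_univ _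
    _ = 4 := by simp

lemma chain4_struct (s : Finset P0) (hch : IsChainFinset s) (hcard : s.card = 4) :
    P0.el 0 ∈ s ∧ P0.el 11 ∈ s ∧ ∃ z ∈ s, rk z = 2 := by
  have himg : (s.image rk).card = s.card :=
    Finset.card_image_of_injOn (fun a ha b hb hab => rk_comp_inj a b (hch a ha b hb) hab)
  have huniv : s.image rk = (Finset.univ : Finset (Fin 4)) := by
    apply Finset.eq_of_subset_of_card_le (Finset.subset_univ _)
    simp [himg, hcard]
  have h0 : (0 : Fin 4) ∈ s.image rk := by rw [huniv]; exact Finset.mem_univ _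
  have h3 : (3 : Fin 4) ∈ s.image rk := by rw [huniv]; exact Finset.mem_univ _
  have h2 : (2 : Fin 4) ∈ s.image rk := by rw [huniv]; exact Finset.mem_univ _
  obtain ⟨z0, hz0, hz0e⟩ := Finset.mem_image.1 h0
  obtain ⟨z3, hz3, hz3e⟩ := Finset.mem_image.1 h3
  obtain ⟨z2, hz2, hz2e⟩ := Finset.mem_image.1 h2
  exact ⟨(rk0 z0 hz0e) ▸ hz0, (rk3 z3 hz3e) ▸ hz3, z2, hz2, hz2e⟩

lemma facet_insert {s : Finset {x : P0 // x ∈ Q}}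
    (hs : IsFacet (orderComplex {x : P0 // x ∈ Q}) s) (w : {x : P0 // x ∈ Q})
    (hw : ∀ u ∈ s, p0le w.1 u.1 ∨ p0le u.1 w.1) : w ∈ s := by
  have hchain : IsChainFinset (insert w s) := by
    intro x hx y hy
    rcases Finset.mem_insert.1 hx with h1 | h1
    · rcases Finset.mem_insert.1 hy with h2 | h2
      · subst h1; subst h2; exact Or.inl le_rfl
      · subst h1; exact hw y h2
    · rcases Finset.mem_insert.1 hy with h2 | h2
      · subst h2; exact (hw x h1).symm
      · exact hs.1 x h1 y h2
  have heq := hs.2 (insert w s) hchain (Finset.subset_insert w s)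
  rw [heq]; exact Finset.mem_insert_self w s

lemma facet_bot_top (h0 : P0.el 0 ∈ Q) (h11 : P0.el 11 ∈ Q)
    {s : Finset {x : P0 // x ∈ Q}} (hs : IsFacet (orderComplex {x : P0 // x ∈ Q}) s) :
    (⟨P0.el 0, h0⟩ : {x : P0 // x ∈ Q}) ∈ s ∧ (⟨P0.el 11, h11⟩ : {x : P0 // x ∈ Q}) ∈ s :=
  ⟨facet_insert hs _ (fun u _ => Or.inl (p0le_bot u.1)),
   facet_insert hs _ (fun u _ => Or.inr (p0le_top u.1))⟩

end Core

lemma core_lemma (Q : Set P0) (l : List (Finset {x : P0 // x ∈ Q}))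
    (hsh : IsShelling (orderComplex {x : P0 // x ∈ Q}) l)
    (h0 : P0.el 0 ∈ Q) (h11 : P0.el 11 ∈ Q)
    (s₁ s₂ : Finset (Fin 12))
    (h0s : (0:Fin 12) ∉ s₁ ∧ (0:Fin 12) ∉ s₂ ∧ (11:Fin 12) ∉ s₁ ∧ (11:Fin 12) ∉ s₂)
    (hdisj : ∀ z ∈ s₁, z ∉ s₂)
    (hD1 : ∀ u z : Fin 12, (u ∈ s₁ ∨ u ∈ s₂) → (p0le u z ∨ p0le z u) →
      (z ∈ s₁ ∨ z ∈ s₂ ∨ z = 0 ∨ z = 11))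
    (hD2 : ∀ u z : Fin 12, u ∈ s₁ → z ∈ s₁ → (p0le u z ∨ p0le z u) → u = z)
    (hD3 : ∀ u z : Fin 12, u ∈ s₂ → z ∈ s₂ → (p0le u z ∨ p0le z u) → u = z)
    (hD4 : ∀ u z : Fin 12, u ∈ s₁ → z ∈ s₂ → p0le u z)
    (p q : Fin 12) (hp1 : p ∈ s₁) (hq2 : q ∈ s₂) (hpQ : p ∈ Q) (hqQ : q ∈ Q)
    (j k : ℕ) (hj : j < l.length) (hk : k < l.length) (hjk : j < k)
    (hkside : ∃ w ∈ l.get ⟨k, hk⟩, (w.1 ∈ s₁ ∨ w.1 ∈ s₂))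
    (hmin : ∀ i (hi : i < l.length), i < k → ∀ w ∈ l.get ⟨i, hi⟩, ¬(w.1 ∈ s₁ ∨ w.1 ∈ s₂)) :
    False := by
  obtain ⟨hnd, hfac, hcond⟩ := hsh
  set F := l.get ⟨k, hk⟩ with hFdef
  have hFfac : IsFacet (orderComplex {x : P0 // x ∈ Q}) F := (hfac F).1 (l.get_mem _)
  have hchainF : IsChainFinset F := hFfac.1
  obtain ⟨u, huF, hus⟩ := hkside
  have hb0 : (⟨P0.el 0, h0⟩ : {x : P0 // x ∈ Q}) ∈ F := (facet_bot_top h0 h11 hFfac).1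
  have hb11 : (⟨P0.el 11, h11⟩ : {x : P0 // x ∈ Q}) ∈ F := (facet_bot_top h0 h11 hFfac).2
  -- existence of an s₂-element
  have exw₂ : ∃ w ∈ F, w.1 ∈ s₂ := by
    by_contra hno
    push_neg at hno
    have hqF : (⟨q, hqQ⟩ : {x : P0 // x ∈ Q}) ∈ F := by
      apply facet_insert hFfac
      intro z hz
      rcases hD1 u.1 z.1 hus (hchainF u huF z hz) with h | h | h | h
      · exact Or.inr (hD4 z.1 q h hq2)
      · exact absurd h (hno z hz)
      · exact Or.inr (by rw [h]; exact p0le_bot q)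
      · exact Or.inl (by rw [h]; exact p0le_top q)
    exact hno _ hqF hq2
  -- existence of an s₁-element
  have exw₁ : ∃ w ∈ F, w.1 ∈ s₁ := by
    by_contra hno
    push_neg at hno
    have hpF : (⟨p, hpQ⟩ : {x : P0 // x ∈ Q}) ∈ F := by
      apply facet_insert hFfac
      intro z hz
      rcases hD1 u.1 z.1 hus (hchainF u huF z hz) with h | h | h | h
      · exact absurd h (hno z hz)
      · exact Or.inl (hD4 p z.1 hp1 h)
      · exact Or.inr (by rw [h]; exact p0le_bot p)
      · exact Or.inl (by rw [h]; exact p0le_top p)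
    exact hno _ hpF hp1
  obtain ⟨w₁, hw₁F, hw₁s⟩ := exw₁
  obtain ⟨w₂, hw₂F, hw₂s⟩ := exw₂
  -- F is exactly the quadruple
  have hsub : ∀ z ∈ F, z = (⟨P0.el 0, h0⟩ : {x : P0 // x ∈ Q}) ∨ z = w₁ ∨ z = w₂ ∨
      z = (⟨P0.el 11, h11⟩ : {x : P0 // x ∈ Q}) := by
    intro z hz
    rcases hD1 w₁.1 z.1 (Or.inl hw₁s) (hchainF w₁ hw₁F z hz) with h | h | h | h
    · exact Or.inr (Or.inl (Subtype.ext (hD2 w₁.1 z.1 hw₁s h (hchainF w₁ hw₁F z hz)).symm))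
    · exact Or.inr (Or.inr (Or.inl (Subtype.ext
        (hD3 w₂.1 z.1 hw₂s h (hchainF w₂ hw₂F z hz)).symm)))
    · exact Or.inl (Subtype.ext h)
    · exact Or.inr (Or.inr (Or.inr (Subtype.ext h)))
  have hv01 : (P0.el 0 : Fin 12) ≠ P0.el 11 := by decide
  have hne01 : (⟨P0.el 0, h0⟩ : {x : P0 // x ∈ Q}) ≠ ⟨P0.el 11, h11⟩ := by
    intro h; exact hv01 (congrArg Subtype.val h)
  have hne0w₁ : (⟨P0.el 0, h0⟩ : {x : P0 // x ∈ Q}) ≠ w₁ := by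
    intro h; exact h0s.1 (by rw [show (0:Fin 12) = w₁.1 from congrArg Subtype.val h]; exact hw₁s)
  have hne0w₂ : (⟨P0.el 0, h0⟩ : {x : P0 // x ∈ Q}) ≠ w₂ := by
    intro h; exact h0s.2.1 (by rw [show (0:Fin 12) = w₂.1 from congrArg Subtype.val h]; exact hw₂s)
  have hne11w₁ : (⟨P0.el 11, h11⟩ : {x : P0 // x ∈ Q}) ≠ w₁ := by
    intro h; exact h0s.2.2.1 (by rw [show (11:Fin 12) = w₁.1 from congrArg Subtype.val h]; exact hw₁s)
  have hne11w₂ : (⟨P0.el 11, h11⟩ : {x : P0 // x ∈ Q}) ≠ w₂ := by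
    intro h; exact h0s.2.2.2 (by rw [show (11:Fin 12) = w₂.1 from congrArg Subtype.val h]; exact hw₂s)
  have hnew₁w₂ : w₁ ≠ w₂ := by
    intro h; exact hdisj w₁.1 hw₁s (by rw [congrArg Subtype.val h]; exact hw₂s)
  have hFeq : F = {(⟨P0.el 0, h0⟩ : {x : P0 // x ∈ Q}), w₁, w₂, ⟨P0.el 11, h11⟩} := by
    apply Finset.Subset.antisymm
    · intro z hz
      simp only [Finset.mem_insert, Finset.mem_singleton]
      exact hsub z hz
    · intro z hz
      simp only [Finset.mem_insert, Finset.mem_singleton] at hz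
      rcases hz with rfl | rfl | rfl | rfl
      · exact hb0
      · exact hw₁F
      · exact hw₂F
      · exact hb11
  have hFcard : F.card = 4 := by
    rw [hFeq]
    rw [Finset.card_insert_of_notMem (by
          simp only [Finset.mem_insert, Finset.mem_singleton]
          push_neg
          exact ⟨hne0w₁, hne0w₂, hne01⟩),
        Finset.card_insert_of_notMem (by
          simp only [Finset.mem_insert, Finset.mem_singleton]
          push_neg
          exact ⟨hnew₁w₂, Ne.symm hne11w₁⟩),
        Finset.card_insert_of_notMem (by
          simp only [Finset.mem_singleton]
          exact Ne.symm hne11w₂),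
        Finset.card_singleton]
  -- apply the shelling condition at k
  have hSsub : ({(⟨P0.el 0, h0⟩ : {x : P0 // x ∈ Q}), ⟨P0.el 11, h11⟩} : Finset {x : P0 // x ∈ Q}) ⊆ F := by
    intro z hz
    simp only [Finset.mem_insert, Finset.mem_singleton] at hz
    rcases hz with rfl | rfl
    · exact hb0
    · exact hb11
  have hjfac : IsFacet (orderComplex {x : P0 // x ∈ Q}) (l.get ⟨j, hj⟩) :=
    (hfac _).1 (l.get_mem _)
  have hSsubj : ({(⟨P0.el 0, h0⟩ : {x : P0 // x ∈ Q}), ⟨P0.el 11, h11⟩} : Finset {x : P0 // x ∈ Q}) ⊆ l.get ⟨j, hj⟩ := by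
    intro z hz
    simp only [Finset.mem_insert, Finset.mem_singleton] at hz
    rcases hz with rfl | rfl
    · exact (facet_bot_top h0 h11 hjfac).1
    · exact (facet_bot_top h0 h11 hjfac).2
  obtain ⟨T, hTF, hTcard, hST, i, hi, hik, hTi⟩ :=
    hcond k hk (by omega) _ hSsub ⟨j, hj, hjk, hSsubj⟩
  have hTcard3 : T.card = 3 := by rw [← hFdef, hFcard] at hTcard; omega
  have hScard : ({(⟨P0.el 0, h0⟩ : {x : P0 // x ∈ Q}), ⟨P0.el 11, h11⟩} : Finset {x : P0 // x ∈ Q}).card = 2 := by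
    rw [Finset.card_insert_of_notMem (by simp [hne01]), Finset.card_singleton]
  have hSneT : ({(⟨P0.el 0, h0⟩ : {x : P0 // x ∈ Q}), ⟨P0.el 11, h11⟩} : Finset {x : P0 // x ∈ Q}) ≠ T := by
    intro h; rw [h, hTcard3] at hScard; omega
  obtain ⟨z, hzT, hzS⟩ := Finset.exists_of_ssubset
    (Finset.ssubset_iff_subset_ne.2 ⟨hST, hSneT⟩)
  have hzF : z ∈ F := hTF hzT
  have hzside : z.1 ∈ s₁ ∨ z.1 ∈ s₂ := by
    rcases hsub z hzF with rfl | rfl | rfl | rfl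
    · exact absurd (Finset.mem_insert_self _ _) (fun h => hzS h)
    · exact Or.inl hw₁s
    · exact Or.inr hw₂s
    · exact absurd (by simp : (⟨P0.el 11, h11⟩ : {x : P0 // x ∈ Q}) ∈
        ({(⟨P0.el 0, h0⟩ : {x : P0 // x ∈ Q}), ⟨P0.el 11, h11⟩} : Finset {x : P0 // x ∈ Q})) hzS
  exact hmin i hi hik z (hTi hzT) hzside

def liftC (Q : Set P0) (C : Finset P0) (h : ↑C ⊆ Q) : Finset {x : P0 // x ∈ Q} :=
  C.attach.map ⟨fun x => ⟨x.1, h (Finset.mem_coe.mpr x.2)⟩,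
    fun a b hab => by apply Subtype.ext; exact congrArg (Subtype.val : {x : P0 // x ∈ Q} → P0) hab⟩

lemma mem_liftC {Q : Set P0} {C : Finset P0} {h : ↑C ⊆ Q} {w : {x : P0 // x ∈ Q}} :
    w ∈ liftC Q C h ↔ w.1 ∈ C := by
  simp only [liftC, Finset.mem_map, Finset.mem_attach, Function.Embedding.coeFn_mk, true_and]
  constructor
  · rintro ⟨a, rfl⟩; exact a.2
  · intro hw; exact ⟨⟨w.1, hw⟩, rfl⟩

lemma card_liftC {Q : Set P0} {C : Finset P0} {h : ↑C ⊆ Q} :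
    (liftC Q C h).card = C.card := by
  simp [liftC]

lemma liftC_chain {Q : Set P0} {C : Finset P0} {h : ↑C ⊆ Q} (hch : IsChainFinset C) :
    IsChainFinset (liftC Q C h) := by
  intro x hx y hy
  exact hch x.1 (mem_liftC.1 hx) y.1 (mem_liftC.1 hy)

lemma liftC_facet {Q : Set P0} {C : Finset P0} (h : ↑C ⊆ Q)
    (hch : IsChainFinset C) (hcard : C.card = 4) :
    IsFacet (orderComplex {x : P0 // x ∈ Q}) (liftC Q C h) := by
  refine ⟨liftC_chain hch, ?_⟩
  intro F' hF' hsub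
  have himg : (F'.image Subtype.val).card = F'.card :=
    Finset.card_image_of_injective _ Subtype.val_injective
  have hchI : ∀ x ∈ F'.image Subtype.val, ∀ y ∈ F'.image Subtype.val,
      p0le x y ∨ p0le y x := by
    intro x hx y hy
    obtain ⟨a, ha, rfl⟩ := Finset.mem_image.1 hx
    obtain ⟨b, hb, rfl⟩ := Finset.mem_image.1 hy
    exact hF' a ha b hb
  have hle : F'.card ≤ 4 := by
    rw [← himg]; exact chain_card_le _ hchI
  exact Finset.eq_of_subset_of_card_le hsub (by rw [card_liftC, hcard]; exact hle)

lemma decideA1 : ∀ a b : Fin 12,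
    (a ∈ ({1,2}:Finset (Fin 12)) ∨ a ∈ ({5,6}:Finset (Fin 12))) →
    (p0le a b ∨ p0le b a) →
    (b ∈ ({1,2}:Finset (Fin 12)) ∨ b ∈ ({5,6}:Finset (Fin 12)) ∨ b = 0 ∨ b = 11) := by decide

lemma decideA2 : ∀ u z : Fin 12, u ∈ ({1,2}:Finset (Fin 12)) → z ∈ ({1,2}:Finset (Fin 12)) →
    (p0le u z ∨ p0le z u) → u = z := by decide
lemma decideA3 : ∀ u z : Fin 12, u ∈ ({5,6}:Finset (Fin 12)) → z ∈ ({5,6}:Finset (Fin 12)) →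
    (p0le u z ∨ p0le z u) → u = z := by decide
lemma decideA4 : ∀ u z : Fin 12, u ∈ ({1,2}:Finset (Fin 12)) → z ∈ ({5,6}:Finset (Fin 12)) →
    p0le u z := by decide
lemma D3B : ∀ u z : Fin 12, u ∈ ({7,8}:Finset (Fin 12)) → z ∈ ({7,8}:Finset (Fin 12)) →
    (p0le u z ∨ p0le z u) → u = z := by decide


/-- Any subposet of `P₀` containing two chains of length `3`, one through `a` or `b` and
another through `a′` or `b′`, is not shellable. -/
theorem subposet_of_P0_not_shellable (Q : Set P0)
    (C₁ C₂ : Finset P0)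
    (hC₁Q : ↑C₁ ⊆ Q) (hC₂Q : ↑C₂ ⊆ Q)
    (hC₁chain : IsChainFinset C₁) (hC₂chain : IsChainFinset C₂)
    (hC₁card : C₁.card = 4) (hC₂card : C₂.card = 4)
    (hne : C₁ ≠ C₂)
    (hab : P0.el 1 ∈ C₁ ∨ P0.el 2 ∈ C₁)
    (hab' : P0.el 3 ∈ C₂ ∨ P0.el 4 ∈ C₂) :
    ¬ PosetShellable {x : P0 // x ∈ Q} := by
  rintro ⟨l, hsh⟩
  obtain ⟨h0C₁, h11C₁, z₁, hz₁C₁, hz₁rk⟩ := chain4_struct C₁ hC₁chain hC₁card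
  obtain ⟨h0C₂, h11C₂, z₂, hz₂C₂, hz₂rk⟩ := chain4_struct C₂ hC₂chain hC₂card
  have h0Q : P0.el 0 ∈ Q := hC₁Q (Finset.mem_coe.mpr h0C₁)
  have h11Q : P0.el 11 ∈ Q := hC₁Q (Finset.mem_coe.mpr h11C₁)
  -- side witnesses
  have hx₁ : ∃ x, (x = (1:Fin 12) ∨ x = 2) ∧ x ∈ C₁ := by
    rcases hab with h | h
    · exact ⟨1, Or.inl rfl, h⟩
    · exact ⟨2, Or.inr rfl, h⟩
  have hx₂ : ∃ x, (x = (3:Fin 12) ∨ x = 4) ∧ x ∈ C₂ := by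
    rcases hab' with h | h
    · exact ⟨3, Or.inl rfl, h⟩
    · exact ⟨4, Or.inr rfl, h⟩
  obtain ⟨x₁, hx₁v, hx₁C⟩ := hx₁
  obtain ⟨x₂, hx₂v, hx₂C⟩ := hx₂
  have hy₁ : z₁ = (5:Fin 12) ∨ z₁ = (6:Fin 12) :=
    rk2A z₁ x₁ hz₁rk hx₁v (hC₁chain z₁ hz₁C₁ x₁ hx₁C)
  have hy₂ : z₂ = (7:Fin 12) ∨ z₂ = (8:Fin 12) :=
    rk2B z₂ x₂ hz₂rk hx₂v (hC₂chain z₂ hz₂C₂ x₂ hx₂C)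
  -- the lifted chains are facets, so they appear in the list l
  have hfac₁ := liftC_facet hC₁Q hC₁chain hC₁card
  have hfac₂ := liftC_facet hC₂Q hC₂chain hC₂card
  obtain ⟨⟨i₁, hi₁⟩, hget₁⟩ := List.get_of_mem ((hsh.2.1 _).2 hfac₁)
  obtain ⟨⟨i₂, hi₂⟩, hget₂⟩ := List.get_of_mem ((hsh.2.1 _).2 hfac₂)
  -- least indices of each side
  have hPA : ∃ i, ∃ hi : i < l.length, ∃ w ∈ l.get ⟨i, hi⟩,
      (w.1 ∈ ({1,2}:Finset (Fin 12)) ∨ w.1 ∈ ({5,6}:Finset (Fin 12))) := by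
    refine ⟨i₁, hi₁, ⟨x₁, hC₁Q (Finset.mem_coe.mpr hx₁C)⟩, ?_, ?_⟩
    · rw [hget₁]; exact mem_liftC.2 hx₁C
    · left
      rcases hx₁v with rfl | rfl
      · exact (by decide : (1:Fin 12) ∈ ({1,2}:Finset (Fin 12)))
      · exact (by decide : (2:Fin 12) ∈ ({1,2}:Finset (Fin 12)))
  have hPB : ∃ i, ∃ hi : i < l.length, ∃ w ∈ l.get ⟨i, hi⟩,
      (w.1 ∈ ({3,4}:Finset (Fin 12)) ∨ w.1 ∈ ({7,8}:Finset (Fin 12))) := by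
    refine ⟨i₂, hi₂, ⟨x₂, hC₂Q (Finset.mem_coe.mpr hx₂C)⟩, ?_, ?_⟩
    · rw [hget₂]; exact mem_liftC.2 hx₂C
    · left
      rcases hx₂v with rfl | rfl
      · exact (by decide : (3:Fin 12) ∈ ({3,4}:Finset (Fin 12)))
      · exact (by decide : (4:Fin 12) ∈ ({3,4}:Finset (Fin 12)))
  classical
  let kA := Nat.find hPA
  let kB := Nat.find hPB
  obtain ⟨hkA, wA, hwAmem, hwAs⟩ := Nat.find_spec hPA
  obtain ⟨hkB, wB, hwBmem, hwBs⟩ := Nat.find_spec hPB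
  have hkAB : kA ≠ kB := by
    intro h
    have : wA ∈ l.get ⟨kB, hkB⟩ := by
      have : (⟨kA, hkA⟩ : Fin l.length) = ⟨kB, hkB⟩ := by ext; exact h
      rw [← this]; exact hwAmem
    have hcomp := ((hsh.2.1 _).1 (l.get_mem _)).1 wA this wB hwBmem
    exact incompAB wA.1 wB.1 hwAs hwBs hcomp
  rcases Nat.lt_or_ge kA kB with hlt | hge
  · -- side B appears strictly later: contradiction via core lemma
    refine core_lemma Q l hsh h0Q h11Q ({3,4}:Finset (Fin 12)) ({7,8}:Finset (Fin 12))
      (by decide) (by decide) D1B D2B D3B D4B x₂ z₂ ?_ ?_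
      (hC₂Q (Finset.mem_coe.mpr hx₂C)) (hC₂Q (Finset.mem_coe.mpr hz₂C₂))
      kA kB hkA hkB hlt ⟨wB, hwBmem, hwBs⟩ ?_
    · rcases hx₂v with rfl | rfl <;> decide
    · rcases hy₂ with rfl | rfl <;> decide
    · intro i hi hik w hw hside
      exact Nat.find_min hPB hik ⟨hi, w, hw, hside⟩
  · have hlt : kB < kA := by omega
    refine core_lemma Q l hsh h0Q h11Q ({1,2}:Finset (Fin 12)) ({5,6}:Finset (Fin 12))
      (by decide) (by decide) decideA1 decideA2 decideA3 decideA4 x₁ z₁ ?_ ?_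
      (hC₁Q (Finset.mem_coe.mpr hx₁C)) (hC₁Q (Finset.mem_coe.mpr hz₁C₁))
      kB kA hkB hkA hlt ⟨wA, hwAmem, hwAs⟩ ?_
    · rcases hx₁v with rfl | rfl <;> decide
    · rcases hy₁ with rfl | rfl <;> decide
    · intro i hi hik w hw hside
      exact Nat.find_min hPA hik ⟨hi, w, hw, hside⟩
end

section
/- Let G be a connected non-simple graph in G* with at least 3 vertices, let its (unique) bundle B have endpoints labeled 1 and 2, and for each vertex i set N*(i) = N_G(i) ∖ {1,2}, where N_G(i) is the set of vertices adjacent to i in G. Then |N*(1) ∪ N*(2)| = 1. -/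
open Classical

set_option maxHeartbeats 1000000

section Obstruction

variable {P : Type*} [PartialOrder P] [BoundedOrder P] [Finite P]

lemma IsChainFinset.mono [Preorder P] {s t : Finset P} (h : IsChainFinset t) (hst : s ⊆ t) :
    IsChainFinset s := fun x hx y hy => h x (hst hx) y (hst hy)

/-- every chain is contained in a facet of the order complex -/
lemma chain_le_facet (s : Finset P) (hs : IsChainFinset s) :
    ∃ F, IsFacet (orderComplex P) F ∧ s ⊆ F := by
  haveI : Fintype P := Fintype.ofFinite P
  classical
  let 𝒮 : Finset (Finset P) := Finset.univ.filter (fun t => IsChainFinset t ∧ s ⊆ t)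
  have hmem : s ∈ 𝒮 := by simp [𝒮, hs]
  obtain ⟨F, hF, hmax⟩ := 𝒮.exists_max_image (fun t => t.card) ⟨s, hmem⟩
  simp only [𝒮, Finset.mem_filter, Finset.mem_univ, true_and] at hF
  refine ⟨F, ⟨hF.1, ?_⟩, hF.2⟩
  intro F' hF' hsub
  have hF'2 : F' ∈ 𝒮 := by
    simp only [𝒮, Finset.mem_filter, Finset.mem_univ, true_and]
    exact ⟨hF', hF.2.trans hsub⟩
  have := hmax F' hF'2
  exact Finset.eq_of_subset_of_card_le hsub this

theorem poset_obstruction (y : P) (hy : ⊥ < y) (Wside : P → Prop)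
    (incomp : ∀ z z', ⊥ < z → z < y → ⊥ < z' → z' < y → ¬ Wside z → Wside z' →
      ¬ (z ≤ z') ∧ ¬ (z' ≤ z))
    (hU : ∃ a b : P, ⊥ < a ∧ a < b ∧ b < y ∧ ¬ Wside a ∧ ¬ Wside b)
    (hW : ∃ a b : P, ⊥ < a ∧ a < b ∧ b < y ∧ Wside a ∧ Wside b) :
    ¬ PosetShellable P := by
  classical
  rintro ⟨l, hnd, hfac, hshell⟩
  -- the base maximal chain M through ⊥ and y
  have hchain0 : IsChainFinset ({⊥, y} : Finset P) := by
    intro a ha b hb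
    simp only [Finset.mem_insert, Finset.mem_singleton] at ha hb
    rcases ha with rfl | rfl <;> rcases hb with rfl | rfl <;> simp
  obtain ⟨M, hMfac, hM0⟩ := chain_le_facet _ hchain0
  have hyM : y ∈ M := hM0 (by simp)
  -- the top chain c'
  set c' : Finset P := insert ⊥ (M.filter (fun z => y ≤ z)) with hc'
  have hbotc' : (⊥ : P) ∈ c' := Finset.mem_insert_self _ _
  have hyc' : y ∈ c' := by
    refine Finset.mem_insert_of_mem ?_
    simp [hyM]
  have hc'M : c' ⊆ M := by
    intro z hz
    rcases Finset.mem_insert.1 hz with rfl | hz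
    · exact hM0 (by simp)
    · exact (Finset.mem_filter.1 hz).1
  have hc'mem : ∀ z ∈ c', z = ⊥ ∨ y ≤ z := by
    intro z hz
    rcases Finset.mem_insert.1 hz with rfl | hz
    · exact Or.inl rfl
    · exact Or.inr (Finset.mem_filter.1 hz).2
  -- key : in any facet containing c', the extra elements lie strictly between ⊥ and y
  have key : ∀ F, IsFacet (orderComplex P) F → c' ⊆ F → ∀ z ∈ F, z ∉ c' → ⊥ < z ∧ z < y := by
    intro F hF hcF z hzF hzc
    have hzbot : z ≠ ⊥ := fun h => hzc (h ▸ hbotc')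
    have hcomp : z ≤ y ∨ y ≤ z := hF.1 z hzF y (hcF hyc')
    constructor
    · exact bot_lt_iff_ne_bot.2 hzbot
    · rcases hcomp with h | h
      · rcases h.lt_or_eq with h | rfl
        · exact h
        · exact absurd hyc' (fun hc => hzc hc)
      · -- y ≤ z : show z ∈ M, then z ∈ c', contradiction
        exfalso
        have hzM : z ∈ M := by
          have hcmpM : ∀ m ∈ M, z ≤ m ∨ m ≤ z := by
            intro m hm
            rcases hMfac.1 m hm y hyM with hmy | hym
            · exact Or.inr (hmy.trans h)
            · have hmc' : m ∈ c' := Finset.mem_insert_of_mem (Finset.mem_filter.2 ⟨hm, hym⟩)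
              exact hF.1 z hzF m (hcF hmc')
          have hins : IsChainFinset (insert z M) := by
            intro a1 ha1 b1 hb1
            rcases Finset.mem_insert.1 ha1 with h1 | h1
            · rcases Finset.mem_insert.1 hb1 with h2 | h2
              · exact Or.inl (h1 ▸ h2 ▸ le_rfl)
              · exact h1 ▸ hcmpM b1 h2
            · rcases Finset.mem_insert.1 hb1 with h2 | h2
              · exact h2 ▸ (hcmpM a1 h1).symm
              · exact hMfac.1 a1 h1 b1 h2
          have := hMfac.2 (insert z M) hins (Finset.subset_insert _ _)
          rw [this]
          exact Finset.mem_insert_self _ _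
        exact hzc (Finset.mem_insert_of_mem (Finset.mem_filter.2 ⟨hzM, h⟩))
  -- a facet containing c' and a chain a < b below y
  have extend : ∀ a b : P, ⊥ < a → a < b → b < y →
      ∃ F, IsFacet (orderComplex P) F ∧ c' ⊆ F ∧ a ∈ F ∧ b ∈ F ∧ a ∉ c' ∧ b ∉ c' := by
    intro a b ha hab hb
    have hna : a ∉ c' := by
      intro h
      rcases hc'mem a h with rfl | h
      · exact absurd rfl ha.ne'
      · exact absurd (h.trans_lt (hab.trans hb)) (lt_irrefl y)
    have hnb : b ∉ c' := by
      intro h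
      rcases hc'mem b h with rfl | h
      · exact absurd hab (by simp)
      · exact absurd (h.trans_lt hb) (lt_irrefl y)
    have hch : IsChainFinset (insert a (insert b c')) := by
      intro x hx z hz
      have hcases : ∀ w, w ∈ insert a (insert b c') → w = a ∨ w = b ∨ w ∈ c' := by
        intro w hw
        rcases Finset.mem_insert.1 hw with rfl | hw
        · exact Or.inl rfl
        rcases Finset.mem_insert.1 hw with rfl | hw
        · exact Or.inr (Or.inl rfl)
        · exact Or.inr (Or.inr hw)
      have hcomp : ∀ w, w = a ∨ w = b ∨ w ∈ c' → ∀ w', w' = a ∨ w' = b ∨ w' ∈ c' →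
          w ≤ w' ∨ w' ≤ w := by
        intro w hw w' hw'
        have hin : ∀ u, u = a ∨ u = b ∨ u ∈ c' → u ≤ y ∨ (u = ⊥ ∨ y ≤ u) := by
          intro u hu
          rcases hu with rfl | rfl | hu
          · exact Or.inl (hab.le.trans hb.le)
          · exact Or.inl hb.le
          · exact Or.inr (hc'mem u hu)
        rcases hw with rfl | rfl | hw <;> rcases hw' with rfl | rfl | hw'
        · exact Or.inl le_rfl
        · exact Or.inl hab.le
        · rcases hc'mem _ hw' with rfl | h
          · exact Or.inr bot_le
          · exact Or.inl ((hab.le.trans hb.le).trans h)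
        · exact Or.inr hab.le
        · exact Or.inl le_rfl
        · rcases hc'mem _ hw' with rfl | h
          · exact Or.inr bot_le
          · exact Or.inl (hb.le.trans h)
        · rcases hc'mem _ hw with rfl | h
          · exact Or.inl bot_le
          · exact Or.inr ((hab.le.trans hb.le).trans h)
        · rcases hc'mem _ hw with rfl | h
          · exact Or.inl bot_le
          · exact Or.inr (hb.le.trans h)
        · -- both in c' ⊆ M
          exact hMfac.1 w (hc'M hw) w' (hc'M hw')
      exact hcomp x (hcases x hx) z (hcases z hz)
    obtain ⟨F, hFfac, hsub⟩ := chain_le_facet _ hch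
    refine ⟨F, hFfac, ?_, ?_, ?_, hna, hnb⟩
    · intro u hu; exact hsub (Finset.mem_insert_of_mem (Finset.mem_insert_of_mem hu))
    · exact hsub (Finset.mem_insert_self _ _)
    · exact hsub (Finset.mem_insert_of_mem (Finset.mem_insert_self _ _))
  -- index predicate
  let PP : (P → Prop) → ℕ → Prop := fun q k =>
    ∃ hk : k < l.length, c' ⊆ l.get ⟨k, hk⟩ ∧ 2 ≤ ((l.get ⟨k, hk⟩) \ c').card ∧
      ∀ z ∈ (l.get ⟨k, hk⟩) \ c', q z
  have lget_mem : ∀ (k : ℕ) (hk : k < l.length), IsFacet (orderComplex P) (l.get ⟨k, hk⟩) :=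
    fun k hk => (hfac _).1 (l.get_mem _)
  -- a facet with a 2-chain of side q yields an index satisfying PP q
  have mkPP : ∀ (q : P → Prop) (a b : P), ⊥ < a → a < b → b < y → q a → q b →
      (∀ z z', ⊥ < z → z < y → ⊥ < z' → z' < y → ¬ q z → q z' → ¬ (z ≤ z') ∧ ¬ (z' ≤ z)) →
      ∃ k, PP q k := by
    intro q a b ha hab hby hqa hqb hinc
    obtain ⟨F, hFfac, hcF, haF, hbF, hac, hbc⟩ := extend a b ha hab hby
    obtain ⟨⟨k, hk⟩, hFk⟩ := List.mem_iff_get.1 ((hfac F).2 hFfac)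
    refine ⟨k, hk, ?_⟩
    rw [hFk]
    refine ⟨hcF, ?_, ?_⟩
    · have hsub : ({a, b} : Finset P) ⊆ F \ c' := by
        intro u hu
        rcases Finset.mem_insert.1 hu with rfl | hu
        · exact Finset.mem_sdiff.2 ⟨haF, hac⟩
        · rw [Finset.mem_singleton] at hu
          subst hu
          exact Finset.mem_sdiff.2 ⟨hbF, hbc⟩
      calc 2 = ({a, b} : Finset P).card := (Finset.card_pair hab.ne).symm
        _ ≤ (F \ c').card := Finset.card_le_card hsub
    · intro z hz
      have hzF := Finset.mem_sdiff.1 hz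
      obtain ⟨hz1, hz2⟩ := key F hFfac hcF z hzF.1 hzF.2
      by_contra hqz
      have hcmp : z ≤ a ∨ a ≤ z := hFfac.1 z hzF.1 a haF
      have := hinc z a hz1 hz2 ha (hab.trans hby) hqz hqa
      rcases hcmp with h | h
      · exact this.1 h
      · exact this.2 h
  -- the descent argument
  have descent : ∀ (q : P → Prop),
      (∀ z z', ⊥ < z → z < y → ⊥ < z' → z' < y → ¬ q z → q z' → ¬ (z ≤ z') ∧ ¬ (z' ≤ z)) →
      ∀ i (hi : i < l.length), c' ⊆ l.get ⟨i, hi⟩ →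
      ∀ k0, PP q k0 → (∀ j, j < k0 → ¬ PP q j) → i < k0 → False := by
    intro q hinc i hi hci k0 hPk0 hmin hilt
    obtain ⟨hk0, hck0, hcard0, hside0⟩ := hPk0
    -- apply the shelling condition at k0 with S = c'
    have h1k0 : 1 ≤ k0 := by omega
    obtain ⟨T, hTsub, hTcard, hcT, j, hj, hjk0, hTj⟩ :=
      hshell k0 hk0 h1k0 c' hck0 ⟨i, hi, hilt, hci⟩
    -- T \ c' is nonempty
    have hc'T : c'.card ≤ T.card := Finset.card_le_card hcT
    have hcsub : c' ⊆ l.get ⟨k0, hk0⟩ := hck0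
    have hcardTd : (T \ c').card = T.card - c'.card := Finset.card_sdiff_of_subset hcT
    have hcardKd : ((l.get ⟨k0, hk0⟩) \ c').card = (l.get ⟨k0, hk0⟩).card - c'.card :=
      Finset.card_sdiff_of_subset hcsub
    have hc'le : c'.card ≤ (l.get ⟨k0, hk0⟩).card := Finset.card_le_card hcsub
    have hpos : 0 < (T \ c').card := by omega
    obtain ⟨z0, hz0⟩ := Finset.card_pos.1 hpos
    have hz0' := Finset.mem_sdiff.1 hz0
    have hz0K : z0 ∈ (l.get ⟨k0, hk0⟩) \ c' := Finset.mem_sdiff.2 ⟨hTsub hz0'.1, hz0'.2⟩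
    have hqz0 : q z0 := hside0 z0 hz0K
    -- the facet F_j
    have hFj := lget_mem j hj
    have hTFj : T ⊆ l.get ⟨j, hj⟩ := hTj
    have hcFj : c' ⊆ l.get ⟨j, hj⟩ := hcT.trans hTFj
    have hTne : T ≠ l.get ⟨j, hj⟩ := by
      intro hEq
      have h2 : l.get ⟨j, hj⟩ = l.get ⟨k0, hk0⟩ :=
        hFj.2 _ (lget_mem k0 hk0).1 (hEq ▸ hTsub)
      have hne2 : j ≠ k0 := by omega
      exact hne2 (Fin.mk.inj_iff.1 (List.Nodup.get_inj_iff hnd |>.1 h2))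
    have hTlt : T.card < (l.get ⟨j, hj⟩).card :=
      Finset.card_lt_card (ssubset_of_subset_of_ne hTFj hTne)
    have hcFjcard : ((l.get ⟨j, hj⟩) \ c').card = (l.get ⟨j, hj⟩).card - c'.card :=
      Finset.card_sdiff_of_subset hcFj
    have hPj : PP q j := by
      refine ⟨hj, hcFj, by omega, ?_⟩
      intro z hz
      have hzmem := Finset.mem_sdiff.1 hz
      obtain ⟨hzb, hzy⟩ := key _ hFj hcFj z hzmem.1 hzmem.2
      obtain ⟨hz0b, hz0y⟩ := key _ (lget_mem k0 hk0) hcsub z0 (Finset.mem_sdiff.1 hz0K).1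
        (Finset.mem_sdiff.1 hz0K).2
      by_contra hqz
      have hcmp : z ≤ z0 ∨ z0 ≤ z := hFj.1 z hzmem.1 z0 (hTFj hz0'.1)
      have := hinc z z0 hzb hzy hz0b hz0y hqz hqz0
      rcases hcmp with h | h
      · exact this.1 h
      · exact this.2 h
    exact hmin j hjk0 hPj
  -- build the two facets
  obtain ⟨a, b, ha, hab, hby, hqa, hqb⟩ := hU
  obtain ⟨a', b', ha', hab', hby', hqa', hqb'⟩ := hW
  have hincW : ∀ z z', ⊥ < z → z < y → ⊥ < z' → z' < y → ¬ Wside z → Wside z' →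
      ¬ (z ≤ z') ∧ ¬ (z' ≤ z) := incomp
  have hincU : ∀ z z', ⊥ < z → z < y → ⊥ < z' → z' < y → ¬ (¬ Wside z) → (¬ Wside z') →
      ¬ (z ≤ z') ∧ ¬ (z' ≤ z) := by
    intro z z' h1 h2 h3 h4 h5 h6
    have := incomp z' z h3 h4 h1 h2 h6 (not_not.1 h5)
    exact ⟨this.2, this.1⟩
  obtain ⟨kUw, hkUw⟩ := mkPP (fun z => ¬ Wside z) a b ha hab hby hqa hqb hincU
  obtain ⟨kWw, hkWw⟩ := mkPP Wside a' b' ha' hab' hby' hqa' hqb' hincW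
  have hneU : {m | PP (fun z => ¬ Wside z) m}.Nonempty := ⟨kUw, hkUw⟩
  have hneW : {m | PP Wside m}.Nonempty := ⟨kWw, hkWw⟩
  set kU := sInf {m | PP (fun z => ¬ Wside z) m} with hkUdef
  set kW := sInf {m | PP Wside m} with hkWdef
  have hPkU : PP (fun z => ¬ Wside z) kU := Nat.sInf_mem hneU
  have hPkW : PP Wside kW := Nat.sInf_mem hneW
  have hminU : ∀ j, j < kU → ¬ PP (fun z => ¬ Wside z) j := by
    intro j hj hPj
    exact absurd hj (not_lt.2 (Nat.sInf_le hPj))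
  have hminW : ∀ j, j < kW → ¬ PP Wside j := by
    intro j hj hPj
    exact absurd hj (not_lt.2 (Nat.sInf_le hPj))
  have hkne : kU ≠ kW := by
    intro h
    obtain ⟨hk, _, hcard, hside⟩ := hPkU
    obtain ⟨hk', _, _, hside'⟩ := hPkW
    obtain ⟨z, hz⟩ := Finset.card_pos.1 (by omega : 0 < ((l.get ⟨kU, hk⟩) \ c').card)
    have hEq : (⟨kU, hk⟩ : Fin l.length) = ⟨kW, hk'⟩ := Fin.ext h
    have hz' : z ∈ (l.get ⟨kW, hk'⟩) \ c' := by rw [← hEq]; exact hz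
    exact hside z hz (hside' z hz')
  rcases hkne.lt_or_gt with h | h
  · exact descent Wside hincW kU hPkU.1 hPkU.2.1 kW hPkW hminW h
  · exact descent (fun z => ¬ Wside z) hincU kW hPkW.1 hPkW.2.1 kU hPkU hminU h

end Obstruction

section PartB

namespace Multigraph

variable (G : Multigraph)

lemma adjIn_symm {S : Set G.El} {u v : G.V} (h : G.adjIn S u v) : G.adjIn S v u := by
  obtain ⟨h1, h2, e, he, hm⟩ := h
  exact ⟨h2, h1, e, he.symm, hm⟩

lemma rtg_adjIn_symm {S : Set G.El} {u v : G.V}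
    (h : Relation.ReflTransGen (G.adjIn S) u v) : Relation.ReflTransGen (G.adjIn S) v u :=
  (@Relation.ReflTransGen.stdSymm _ _ ⟨fun _ _ hab => G.adjIn_symm hab⟩).symm _ _ h

lemma inl_mem_componentIn_iff {S : Set G.El} {v u : G.V} :
    Sum.inl u ∈ G.componentIn S v ↔ Relation.ReflTransGen (G.adjIn S) v u := by
  constructor
  · rintro (⟨w, hw, hr⟩ | ⟨e, he, _, _⟩)
    · injection hw with h
      subst h
      exact hr
    · exact absurd he (by simp)
  · intro h
    exact Or.inl ⟨u, rfl, h⟩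

lemma inr_mem_componentIn_iff {S : Set G.El} {v : G.V} {e : G.E} :
    Sum.inr e ∈ G.componentIn S v ↔
      Sum.inr e ∈ S ∧ Relation.ReflTransGen (G.adjIn S) v (G.fst e) := by
  constructor
  · rintro (⟨w, hw, _⟩ | ⟨e', he', hS, hr⟩)
    · exact absurd hw (by simp)
    · rw [Sum.inr.injEq] at he'
      subst he'
      exact ⟨hS, hr⟩
  · rintro ⟨hS, hr⟩
    exact Or.inr ⟨e, rfl, hS, hr⟩

lemma componentIn_subset {S : Set G.El} {v : G.V} (hv : Sum.inl v ∈ S) :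
    G.componentIn S v ⊆ S := by
  rintro x (⟨w, rfl, hr⟩ | ⟨e, rfl, hS, _⟩)
  · induction hr with
    | refl => exact hv
    | tail _ h2 _ => exact h2.2.1
  · exact hS


lemma sameEnds_symm {e e' : G.E} (h : G.sameEnds e e') : G.sameEnds e' e := by
  rcases h with ⟨h1, h2⟩ | ⟨h1, h2⟩
  · exact Or.inl ⟨h1.symm, h2.symm⟩
  · exact Or.inr ⟨h2.symm, h1.symm⟩

lemma adj_symm {u v : G.V} (h : G.adj u v) : G.adj v u := by
  obtain ⟨e, he⟩ := h
  exact ⟨e, he.symm⟩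

lemma reachable_symm {u v : G.V} (h : G.reachable u v) : G.reachable v u :=
  (@Relation.ReflTransGen.stdSymm _ _ ⟨fun _ _ hab => G.adj_symm hab⟩).symm _ _ h

lemma even_total : ∀ (n : ℕ) (S : Set G.El), S.ncard = n → G.SemiInduced S →
    (∀ v, Sum.inl v ∈ S → Even ((G.componentIn S v).ncard)) → Even S.ncard := by
  intro n
  induction n using Nat.strong_induction_on with
  | _ n ih =>
    intro S hn hsi hev
    by_cases hvert : ∃ v, Sum.inl v ∈ S
    swap
    · have hS : S = ∅ := by
        ext x
        simp only [Set.mem_empty_iff_false, iff_false]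
        intro hx
        cases x with
        | inl v => exact hvert ⟨v, hx⟩
        | inr e => exact hvert ⟨G.fst e, (hsi.1 e hx).2.1⟩
      simp [hS]
    obtain ⟨v, hv⟩ := hvert
    set R := G.adjIn S with hR
    set C := G.componentIn S v with hC
    have hCS : C ⊆ S := G.componentIn_subset hv
    set S' := S \ C with hS'
    have hS'S : S' ⊆ S := Set.diff_subset
    have step1 : ∀ {a b : G.V}, Relation.ReflTransGen R a b →
        ¬ Relation.ReflTransGen R v a → ¬ Relation.ReflTransGen R v b :=
      fun hab hva hvb => hva (hvb.trans (G.rtg_adjIn_symm hab))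
    have step2 : ∀ a b : G.V, ¬ Relation.ReflTransGen R v a → R a b → G.adjIn S' a b := by
      intro a b hva hab
      have hvb : ¬ Relation.ReflTransGen R v b :=
        step1 (Relation.ReflTransGen.single hab) hva
      obtain ⟨ha, hb, e, hends, himp⟩ := hab
      refine ⟨⟨ha, ?_⟩, ⟨hb, ?_⟩, e, hends, ?_⟩
      · rw [hC, G.inl_mem_componentIn_iff]; exact hva
      · rw [hC, G.inl_mem_componentIn_iff]; exact hvb
      · intro hm
        refine ⟨himp hm, ?_⟩
        rw [hC, G.inr_mem_componentIn_iff]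
        rintro ⟨_, hr⟩
        rcases hends with ⟨hfst, _⟩ | ⟨hfst, _⟩
        · exact hva (hfst ▸ hr)
        · exact hvb (hfst ▸ hr)
    have step3 : ∀ {a b : G.V}, Relation.ReflTransGen R a b →
        ¬ Relation.ReflTransGen R v a → Relation.ReflTransGen (G.adjIn S') a b := by
      intro a b hab hva
      induction hab with
      | refl => exact Relation.ReflTransGen.refl
      | tail h1 h2 ih2 => exact ih2.tail (step2 _ _ (step1 h1 hva) h2)
    have step4 : ∀ {a b : G.V}, G.adjIn S' a b → R a b := by
      rintro a b ⟨ha, hb, e, hends, himp⟩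
      exact ⟨hS'S ha, hS'S hb, e, hends, fun hm => hS'S (himp hm)⟩
    have step4' : ∀ {a b : G.V}, Relation.ReflTransGen (G.adjIn S') a b →
        Relation.ReflTransGen R a b :=
      fun hab => Relation.ReflTransGen.mono (fun _ _ => step4) _ _ hab
    have hnotin : ∀ a : G.V, Sum.inl a ∈ S' → ¬ Relation.ReflTransGen R v a := by
      intro a ha
      have := ha.2
      rw [hC, G.inl_mem_componentIn_iff] at this
      exact this
    have compEq : ∀ a : G.V, Sum.inl a ∈ S' → G.componentIn S' a = G.componentIn S a := by
      intro a ha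
      ext x
      cases x with
      | inl u =>
        rw [G.inl_mem_componentIn_iff, G.inl_mem_componentIn_iff]
        exact ⟨fun h => step4' h, fun h => step3 h (hnotin a ha)⟩
      | inr e =>
        rw [G.inr_mem_componentIn_iff, G.inr_mem_componentIn_iff]
        constructor
        · rintro ⟨h1, h2⟩
          exact ⟨hS'S h1, step4' h2⟩
        · rintro ⟨h1, h2⟩
          refine ⟨⟨h1, ?_⟩, step3 h2 (hnotin a ha)⟩
          rw [hC, G.inr_mem_componentIn_iff]
          rintro ⟨_, hr⟩
          exact step1 h2 (hnotin a ha) hr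
    have hsi' : G.SemiInduced S' := by
      constructor
      · intro e he
        obtain ⟨hm, hf, hs⟩ := hsi.1 e (hS'S he)
        have hrf : ¬ Relation.ReflTransGen R v (G.fst e) := by
          intro hr
          apply he.2
          rw [hC, G.inr_mem_componentIn_iff]
          exact ⟨hS'S he, hr⟩
        have hrs : ¬ Relation.ReflTransGen R v (G.snd e) := by
          intro hr
          apply hrf
          refine hr.tail ⟨hs, hf, e, Or.inr ⟨rfl, rfl⟩, fun _ => hS'S he⟩
        refine ⟨hm, ⟨hf, ?_⟩, ⟨hs, ?_⟩⟩
        · rw [hC, G.inl_mem_componentIn_iff]; exact hrf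
        · rw [hC, G.inl_mem_componentIn_iff]; exact hrs
      · intro e hm hf hs
        obtain ⟨e', hse, he'⟩ := hsi.2 e hm (hS'S hf) (hS'S hs)
        refine ⟨e', hse, he', ?_⟩
        rw [hC, G.inr_mem_componentIn_iff]
        rintro ⟨_, hr⟩
        rcases hse with ⟨h1, h2⟩ | ⟨h1, h2⟩
        · have := hf.2
          rw [hC, G.inl_mem_componentIn_iff] at this
          exact this (by rw [h1]; exact hr)
        · have := hs.2
          rw [hC, G.inl_mem_componentIn_iff] at this
          exact this (by rw [h2]; exact hr)
    have hev' : ∀ u, Sum.inl u ∈ S' → Even ((G.componentIn S' u).ncard) := by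
      intro u hu
      rw [compEq u hu]
      exact hev u (hS'S hu)
    have hvC : Sum.inl v ∈ C := by
      rw [hC, G.inl_mem_componentIn_iff]
    have hss : S' ⊂ S := ⟨hS'S, fun h => (h hv).2 hvC⟩
    have hlt : S'.ncard < n := hn ▸ Set.ncard_lt_ncard hss (Set.toFinite S)
    have hevS' : Even S'.ncard := ih _ hlt S' rfl hsi' hev'
    have hevC : Even C.ncard := hev v hv
    have hsum : S'.ncard + C.ncard = S.ncard :=
      Set.ncard_diff_add_ncard_of_subset hCS (Set.toFinite S)
    rw [← hsum]
    exact hevS'.add hevC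

end Multigraph

end PartB

instance evenPosetFinite (G : Multigraph) (A : Set G.El) : Finite (EvenPoset G A) := by
  unfold EvenPoset; infer_instance

example (G : Multigraph) (A : Set G.El) (a b : EvenPoset G A) : a ≤ b ↔ a.1 ⊆ b.1 := Iff.rfl

example (G : Multigraph) (A : Set G.El) : (⊥ : EvenPoset G A).1 = ∅ := rfl

/-- Let `G` be a connected non-simple graph in `𝒢*` with at least `3` vertices, whose
(unique) bundle has endpoints `u₁` and `u₂`.  Then `|N*(u₁) ∪ N*(u₂)| = 1`, where
`N*(u) = N_G(u) ∖ {u₁, u₂}`. -/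
theorem connected_nonsimple_gstar_neighbors (G : Multigraph)
    (hconn : G.Connected) (hns : ¬ G.Simple) (hG : GStar G)
    (hV : 3 ≤ Nat.card G.V) (u₁ u₂ : G.V)
    (hB : ∀ e, G.Multiple e →
      (G.fst e = u₁ ∧ G.snd e = u₂) ∨ (G.fst e = u₂ ∧ G.snd e = u₁)) :
    {w : G.V | w ≠ u₁ ∧ w ≠ u₂ ∧ (G.adj u₁ w ∨ G.adj u₂ w)}.ncard = 1 := by
  classical
  set N := {w : G.V | w ≠ u₁ ∧ w ≠ u₂ ∧ (G.adj u₁ w ∨ G.adj u₂ w)} with hNdef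
  -- bundle edges
  obtain ⟨e₀, he₀⟩ : ∃ e, G.Multiple e := by
    by_contra h
    push_neg at h
    exact hns (fun e => h e)
  obtain ⟨e₁, he₁ne, he₁se⟩ := he₀
  have he₀ : G.Multiple e₀ := ⟨e₁, he₁ne, he₁se⟩
  have he₁ : G.Multiple e₁ := ⟨e₀, fun h => he₁ne h.symm, G.sameEnds_symm he₁se⟩
  have hu12 : u₁ ≠ u₂ := by
    rcases hB e₀ he₀ with ⟨h1, h2⟩ | ⟨h1, h2⟩
    · exact fun h => G.no_loop e₀ (by rw [h1, h2, h])
    · exact fun h => G.no_loop e₀ (by rw [h1, h2, h])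
  -- adjacency steps stay in {u₁, u₂} when N is empty
  have hNne : N.Nonempty := by
    by_contra hne
    rw [Set.not_nonempty_iff_eq_empty] at hne
    have hstep : ∀ z, G.reachable u₁ z → (z = u₁ ∨ z = u₂) := by
      intro z hz
      induction hz with
      | refl => exact Or.inl rfl
      | tail _ hadj ih =>
        rename_i b c _
        by_contra hc
        push_neg at hc
        have hcN : c ∈ N := by
          refine ⟨hc.1, hc.2, ?_⟩
          rcases ih with rfl | rfl
          · exact Or.inl hadj
          · exact Or.inr hadj
        rw [hne] at hcN
        exact hcN
    obtain ⟨x, hx1, hx2⟩ : ∃ x : G.V, x ≠ u₁ ∧ x ≠ u₂ := by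
      by_contra h
      push_neg at h
      have hsub : (Set.univ : Set G.V) ⊆ {u₁, u₂} := by
        intro x _
        rcases Classical.em (x = u₁) with rfl | hx
        · exact Set.mem_insert _ _
        · exact Set.mem_insert_of_mem _ (h x hx)
      have h1 : Nat.card G.V = (Set.univ : Set G.V).ncard := (Set.ncard_univ _).symm
      have h2 : (Set.univ : Set G.V).ncard ≤ ({u₁, u₂} : Set G.V).ncard :=
        Set.ncard_le_ncard hsub (Set.toFinite _)
      have h3 : ({u₁, u₂} : Set G.V).ncard ≤ 2 := by
        have := Set.ncard_insert_le u₁ ({u₂} : Set G.V)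
        simpa using this
      omega
    rcases hstep x (hconn.2 u₁ x) with rfl | rfl
    · exact hx1 rfl
    · exact hx2 rfl
  have hN1 : 1 ≤ N.ncard := by
    have := (Set.ncard_pos (Set.toFinite N)).2 hNne
    omega
  rcases Nat.lt_or_ge N.ncard 2 with hlt | hge
  · omega
  exfalso
  -- two distinct outside neighbours
  obtain ⟨w, hwN, w', hw'N, hww'⟩ := (Set.one_lt_ncard (Set.toFinite N)).1 (by omega)
  obtain ⟨hw1, hw2, hwadj⟩ := hwN
  obtain ⟨hw'1, hw'2, hw'adj⟩ := hw'N
  -- the PI-spec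
  set Wset : Set G.V := {u₁, u₂, w, w'} with hWdef
  set Rset : Set G.E := {e | G.fst e ∈ Wset ∧ G.snd e ∈ Wset} with hRdef
  have hu₁W : u₁ ∈ Wset := Or.inl rfl
  have hu₂W : u₂ ∈ Wset := Or.inr (Or.inl rfl)
  have hwW : w ∈ Wset := Or.inr (Or.inr (Or.inl rfl))
  have hw'W : w' ∈ Wset := Or.inr (Or.inr (Or.inr rfl))
  have hbc : ∀ e, e ∈ Rset → ∀ e', G.sameEnds e e' → e' ∈ Rset := by
    intro e he e' hse
    rcases hse with ⟨h1, h2⟩ | ⟨h1, h2⟩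
    · exact ⟨h1 ▸ he.1, h2 ▸ he.2⟩
    · exact ⟨h2 ▸ he.2, h1 ▸ he.1⟩
  set spec : PISpec G := ⟨Wset, Rset, fun _ he => he,
    fun e h1 h2 => ⟨e, ⟨h1, h2⟩, Or.inl ⟨rfl, rfl⟩⟩,
    fun e he => Or.inl (hbc e he)⟩ with hspecdef
  set H : Multigraph := spec.toGraph with hHdef
  -- vertices and edges of H
  have hbR : ∀ e, G.Multiple e → e ∈ Rset := by
    intro e he
    rcases hB e he with ⟨h1, h2⟩ | ⟨h1, h2⟩
    · exact ⟨h1 ▸ hu₁W, h2 ▸ hu₂W⟩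
    · exact ⟨h1 ▸ hu₂W, h2 ▸ hu₁W⟩
  set v1 : H.V := (⟨u₁, hu₁W⟩ : H.V) with hv1
  set v2 : H.V := (⟨u₂, hu₂W⟩ : H.V) with hv2
  set v3 : H.V := (⟨w, hwW⟩ : H.V) with hv3
  set v4 : H.V := (⟨w', hw'W⟩ : H.V) with hv4
  set f0 : H.E := (⟨e₀, hbR e₀ he₀⟩ : H.E) with hf0
  set f1 : H.E := (⟨e₁, hbR e₁ he₁⟩ : H.E) with hf1
  -- transfer lemmas between G and H
  have hSE1 : ∀ a b : H.E, G.sameEnds a.1 b.1 → H.sameEnds a b := by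
    intro a b h
    rcases h with ⟨h1, h2⟩ | ⟨h1, h2⟩
    · exact Or.inl ⟨Subtype.ext h1, Subtype.ext h2⟩
    · exact Or.inr ⟨Subtype.ext h1, Subtype.ext h2⟩
  have hSE2 : ∀ a b : H.E, H.sameEnds a b → G.sameEnds a.1 b.1 := by
    intro a b h
    rcases h with ⟨h1, h2⟩ | ⟨h1, h2⟩
    · exact Or.inl ⟨congrArg Subtype.val h1, congrArg Subtype.val h2⟩
    · exact Or.inr ⟨congrArg Subtype.val h1, congrArg Subtype.val h2⟩
  have hpar : ∀ a b : G.E, G.Multiple a → G.Multiple b → G.sameEnds a b := by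
    intro a b ha hb
    rcases hB a ha with ⟨h1, h2⟩ | ⟨h1, h2⟩ <;> rcases hB b hb with ⟨h3, h4⟩ | ⟨h3, h4⟩
    · exact Or.inl ⟨h1.trans h3.symm, h2.trans h4.symm⟩
    · exact Or.inr ⟨h1.trans h4.symm, h2.trans h3.symm⟩
    · exact Or.inr ⟨h1.trans h4.symm, h2.trans h3.symm⟩
    · exact Or.inl ⟨h1.trans h3.symm, h2.trans h4.symm⟩
  have hmultG : ∀ ee : H.E, H.Multiple ee → G.Multiple ee.1 := by
    rintro ee ⟨ee', hne, hse⟩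
    exact ⟨ee'.1, fun h => hne (Subtype.ext h), hSE2 _ _ hse⟩
  have hmultH : ∀ ee : H.E, G.Multiple ee.1 → H.Multiple ee := by
    intro ee hm
    by_cases h : ee.1 = e₀
    · exact ⟨f1, fun hc => he₁ne ((congrArg Subtype.val hc).trans h),
        hSE1 _ _ (hpar _ _ hm he₁)⟩
    · exact ⟨f0, fun hc => h (congrArg Subtype.val hc).symm,
        hSE1 _ _ (hpar _ _ hm he₀)⟩
  have hBH : ∀ ee : H.E, H.Multiple ee →
      (H.fst ee = v1 ∧ H.snd ee = v2) ∨ (H.fst ee = v2 ∧ H.snd ee = v1) := by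
    intro ee hm
    rcases hB ee.1 (hmultG ee hm) with ⟨h1, h2⟩ | ⟨h1, h2⟩
    · exact Or.inl ⟨Subtype.ext h1, Subtype.ext h2⟩
    · exact Or.inr ⟨Subtype.ext h1, Subtype.ext h2⟩
  have hmf0 : H.Multiple f0 := hmultH f0 he₀
  have hmf1 : H.Multiple f1 := hmultH f1 he₁
  -- distinctness of the labelled vertices
  have hv12 : v1 ≠ v2 := fun h => hu12 (congrArg Subtype.val h)
  have hv13 : v1 ≠ v3 := fun h => hw1 (congrArg Subtype.val h).symm
  have hv23 : v2 ≠ v3 := fun h => hw2 (congrArg Subtype.val h).symm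
  have hv14 : v1 ≠ v4 := fun h => hw'1 (congrArg Subtype.val h).symm
  have hv24 : v2 ≠ v4 := fun h => hw'2 (congrArg Subtype.val h).symm
  have hv34 : v3 ≠ v4 := fun h => hww' (congrArg Subtype.val h)
  have hf01 : f0 ≠ f1 := fun h => he₁ne (congrArg Subtype.val h).symm
  -- the admissible collection
  set yset : Set H.El := {Sum.inl v1, Sum.inl v2, Sum.inl v3, Sum.inl v4,
    Sum.inr f0, Sum.inr f1} with hysetdef
  have hAall : ∀ u : H.V, Sum.inl u ∈ yset := by
    rintro ⟨x, hx⟩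
    rcases hx with rfl | rfl | rfl | rfl
    · exact Or.inl rfl
    · exact Or.inr (Or.inl rfl)
    · exact Or.inr (Or.inr (Or.inl rfl))
    · exact Or.inr (Or.inr (Or.inr (Or.inl rfl)))
  have hedge_mem : ∀ x : H.El, x ∈ yset →
      x = Sum.inl v1 ∨ x = Sum.inl v2 ∨ x = Sum.inl v3 ∨ x = Sum.inl v4 ∨
      x = Sum.inr f0 ∨ x = Sum.inr f1 := fun x hx => hx
  have hyedges : ∀ e : H.E, Sum.inr e ∈ yset → e = f0 ∨ e = f1 := by
    intro e he
    rcases he with h | h | h | h | h | h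
    all_goals first
      | (exact absurd h Sum.inr_ne_inl)
      | (injection h with h'; exact Or.inl h')
      | (injection h with h'; exact Or.inr h')
  -- H is connected
  have hadj12 : H.adj v1 v2 := ⟨f0, hBH f0 hmf0⟩
  have hsimple_edge : ∀ (z : G.V) (hzW : z ∈ Wset), z ≠ u₁ → z ≠ u₂ →
      (G.adj u₁ z ∨ G.adj u₂ z) →
      ∃ (iu : H.V) (ee : H.E), (iu = v1 ∨ iu = v2) ∧ ¬ H.Multiple ee ∧
        ((H.fst ee = iu ∧ H.snd ee = (⟨z, hzW⟩ : H.V)) ∨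
         (H.fst ee = (⟨z, hzW⟩ : H.V) ∧ H.snd ee = iu)) := by
    intro z hzW hz1 hz2 hadj
    have hnm : ∀ ee : H.E, (G.fst ee.1 = z ∨ G.snd ee.1 = z) → ¬ H.Multiple ee := by
      intro ee hor hm
      rcases hB ee.1 (hmultG ee hm) with ⟨h1, h2⟩ | ⟨h1, h2⟩ <;> rcases hor with h | h
      · exact hz1 (h.symm.trans h1)
      · exact hz2 (h.symm.trans h2)
      · exact hz2 (h.symm.trans h1)
      · exact hz1 (h.symm.trans h2)
    rcases hadj with ⟨e, he⟩ | ⟨e, he⟩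
    · have heR : e ∈ Rset := by
        rcases he with ⟨h1, h2⟩ | ⟨h1, h2⟩
        · exact ⟨h1 ▸ hu₁W, h2 ▸ hzW⟩
        · exact ⟨h1 ▸ hzW, h2 ▸ hu₁W⟩
      refine ⟨v1, ⟨e, heR⟩, Or.inl rfl, hnm _ ?_, ?_⟩
      · rcases he with ⟨h1, h2⟩ | ⟨h1, h2⟩
        · exact Or.inr h2
        · exact Or.inl h1
      · rcases he with ⟨h1, h2⟩ | ⟨h1, h2⟩
        · exact Or.inl ⟨Subtype.ext h1, Subtype.ext h2⟩
        · exact Or.inr ⟨Subtype.ext h1, Subtype.ext h2⟩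
    · have heR : e ∈ Rset := by
        rcases he with ⟨h1, h2⟩ | ⟨h1, h2⟩
        · exact ⟨h1 ▸ hu₂W, h2 ▸ hzW⟩
        · exact ⟨h1 ▸ hzW, h2 ▸ hu₂W⟩
      refine ⟨v2, ⟨e, heR⟩, Or.inr rfl, hnm _ ?_, ?_⟩
      · rcases he with ⟨h1, h2⟩ | ⟨h1, h2⟩
        · exact Or.inr h2
        · exact Or.inl h1
      · rcases he with ⟨h1, h2⟩ | ⟨h1, h2⟩
        · exact Or.inl ⟨Subtype.ext h1, Subtype.ext h2⟩
        · exact Or.inr ⟨Subtype.ext h1, Subtype.ext h2⟩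
  obtain ⟨iw, eew, hiw_or, heew_nm, heew_ends⟩ := hsimple_edge w hwW hw1 hw2 hwadj
  obtain ⟨iw', eew', hiw'_or, heew'_nm, heew'_ends⟩ := hsimple_edge w' hw'W hw'1 hw'2 hw'adj
  have hadjw : H.adj v3 iw := ⟨eew, by
    rcases heew_ends with ⟨h1, h2⟩ | ⟨h1, h2⟩
    · exact Or.inr ⟨h1, h2⟩
    · exact Or.inl ⟨h1, h2⟩⟩
  have hadjw' : H.adj v4 iw' := ⟨eew', by
    rcases heew'_ends with ⟨h1, h2⟩ | ⟨h1, h2⟩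
    · exact Or.inr ⟨h1, h2⟩
    · exact Or.inl ⟨h1, h2⟩⟩
  have hre1 : ∀ b : H.V, H.reachable v1 b := by
    have hr2 : H.reachable v1 v2 := Relation.ReflTransGen.single hadj12
    have hrw : H.reachable v1 v3 := by
      rcases hiw_or with rfl | rfl
      · exact Relation.ReflTransGen.single (H.adj_symm hadjw)
      · exact hr2.tail (H.adj_symm hadjw)
    have hrw' : H.reachable v1 v4 := by
      rcases hiw'_or with rfl | rfl
      · exact Relation.ReflTransGen.single (H.adj_symm hadjw')
      · exact hr2.tail (H.adj_symm hadjw')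
    rintro ⟨x, hx⟩
    rcases hx with rfl | rfl | rfl | rfl
    · exact Relation.ReflTransGen.refl
    · exact hr2
    · exact hrw
    · exact hrw'
  have hHconn : ∀ a b : H.V, H.reachable a b :=
    fun a b => (H.reachable_symm (hre1 a)).trans (hre1 b)
  -- cardinalities
  have hncV : Nat.card H.V = 4 := by
    have h1 : Nat.card H.V = Wset.ncard := Nat.card_coe_set_eq Wset
    rw [h1, hWdef]
    rw [Set.ncard_insert_of_notMem (by simp [hu12, hw1.symm, hw'1.symm]) (Set.toFinite _),
        Set.ncard_insert_of_notMem (by simp [hw2.symm, hw'2.symm]) (Set.toFinite _),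
        Set.ncard_insert_of_notMem (by simp [hww']) (Set.toFinite _),
        Set.ncard_singleton]
  have hy6 : yset.ncard = 6 := by
    rw [hysetdef]
    rw [Set.ncard_insert_of_notMem (by simp [hv12, hv13, hv14]) (Set.toFinite _),
        Set.ncard_insert_of_notMem (by simp [hv23, hv24]) (Set.toFinite _),
        Set.ncard_insert_of_notMem (by simp [hv34]) (Set.toFinite _),
        Set.ncard_insert_of_notMem (by simp) (Set.toFinite _),
        Set.ncard_insert_of_notMem (by simp [hf01]) (Set.toFinite _),
        Set.ncard_singleton]
  -- admissibility
  have hAdm : H.Admissible yset := by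
    refine ⟨?_, ?_, ?_, ?_⟩
    · intro e he
      rcases hyedges e he with rfl | rfl
      · exact hmf0
      · exact hmf1
    · intro v
      have hset : {u : H.V | H.reachable v u ∧ Sum.inl u ∈ yset} = Set.univ := by
        ext u
        simp only [Set.mem_setOf_eq, Set.mem_univ, iff_true]
        exact ⟨hHconn v u, hAall u⟩
      rw [hset, Set.ncard_univ, hncV]
      decide
    · intro v _
      exact hAall v
    · intro e hm
      have hsete : {e' | H.sameEnds e e' ∧ Sum.inr e' ∈ yset} = {f0, f1} := by
        ext e'
        simp only [Set.mem_setOf_eq, Set.mem_insert_iff, Set.mem_singleton_iff]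
        constructor
        · rintro ⟨_, hin⟩
          exact hyedges e' hin
        · rintro (rfl | rfl)
          · exact ⟨hSE1 _ _ (hpar _ _ (hmultG _ hm) he₀), Or.inr (Or.inr (Or.inr (Or.inr (Or.inl rfl))))⟩
          · exact ⟨hSE1 _ _ (hpar _ _ (hmultG _ hm) he₁), Or.inr (Or.inr (Or.inr (Or.inr (Or.inr rfl))))⟩
      refine ⟨⟨f0, hSE1 _ _ (hpar _ _ (hmultG _ hm) he₀),
        Or.inr (Or.inr (Or.inr (Or.inr (Or.inl rfl))))⟩, ?_⟩
      rw [hsete, Set.ncard_pair hf01]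
      decide
  -- helper to establish A-evenness of explicit connected subgraphs
  have hcomp_eq : ∀ (S : Set H.El),
      (∀ a b : H.V, Sum.inl a ∈ S → Sum.inl b ∈ S →
        Relation.ReflTransGen (H.adjIn S) a b) →
      (∀ e : H.E, Sum.inr e ∈ S → Sum.inl (H.fst e) ∈ S) →
      ∀ v, Sum.inl v ∈ S → H.componentIn S v = S := by
    intro S hc hf v hv
    apply subset_antisymm (H.componentIn_subset hv)
    intro x hx
    cases x with
    | inl u => exact (H.inl_mem_componentIn_iff).2 (hc v u hv hx)
    | inr e => exact (H.inr_mem_componentIn_iff).2 ⟨hx, hc v (H.fst e) hv (hf e hx)⟩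
  have hAEM : ∀ (S : Set H.El), S ⊆ yset → H.SemiInduced S →
      (∀ a b : H.V, Sum.inl a ∈ S → Sum.inl b ∈ S →
        Relation.ReflTransGen (H.adjIn S) a b) →
      Even S.ncard → H.AEvenMember yset S := by
    intro S hsub hsi hc hev
    refine ⟨hsi, ?_⟩
    intro v hv
    rw [hcomp_eq S hc (fun e he => (hsi.1 e he).2.1) v hv,
        Set.inter_eq_self_of_subset_left hsub]
    exact hev
  have hadjIn_simple : ∀ (S : Set H.El) (a b : H.V) (ee : H.E), ¬ H.Multiple ee →
      ((H.fst ee = a ∧ H.snd ee = b) ∨ (H.fst ee = b ∧ H.snd ee = a)) →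
      Sum.inl a ∈ S → Sum.inl b ∈ S → H.adjIn S a b :=
    fun _ _ _ ee hnm hor ha hb => ⟨ha, hb, ee, hor, fun hm => absurd hm hnm⟩
  have hadjIn_f0 : ∀ (S : Set H.El), Sum.inl v1 ∈ S → Sum.inl v2 ∈ S → Sum.inr f0 ∈ S →
      H.adjIn S v1 v2 :=
    fun _ h1 h2 h0 => ⟨h1, h2, f0, hBH f0 hmf0, fun _ => h0⟩
  have hsameEnds_f0 : ∀ e : H.E, H.Multiple e → H.sameEnds e f0 :=
    fun e hm => hSE1 _ _ (hpar _ _ (hmultG _ hm) he₀)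
  -- the pair elements
  have hpairAEM : ∀ (z iu : H.V) (ee : H.E), ¬ H.Multiple ee →
      ((H.fst ee = iu ∧ H.snd ee = z) ∨ (H.fst ee = z ∧ H.snd ee = iu)) →
      (iu = v1 ∨ iu = v2) → z ≠ v1 → z ≠ v2 →
      H.AEvenMember yset {Sum.inl iu, Sum.inl z} := by
    intro z iu ee hnm hor hiu hz1 hz2
    have hzne : iu ≠ z := by
      rcases hiu with rfl | rfl
      · exact fun h => hz1 h.symm
      · exact fun h => hz2 h.symm
    refine hAEM _ ?_ ⟨?_, ?_⟩ ?_ ?_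
    · rintro x (rfl | rfl)
      · exact hAall iu
      · exact hAall z
    · rintro e (h | h) <;> exact nomatch h
    · intro e hm hf hs
      exfalso
      have hfe : H.fst e = iu ∨ H.fst e = z := by
        rcases hf with h | h
        · injection h with h'; exact Or.inl h'
        · injection h with h'; exact Or.inr h'
      have hse : H.snd e = iu ∨ H.snd e = z := by
        rcases hs with h | h
        · injection h with h'; exact Or.inl h'
        · injection h with h'; exact Or.inr h'
      rcases hBH e hm with ⟨h1, h2⟩ | ⟨h1, h2⟩
      · rcases hfe with h | h
        · rcases hse with h' | h'
          · exact hv12 ((h1.symm.trans h).trans (h2.symm.trans h').symm)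
          · exact hz2 (h2.symm.trans h').symm
        · exact hz1 (h1.symm.trans h).symm
      · rcases hfe with h | h
        · rcases hse with h' | h'
          · exact hv12 ((h2.symm.trans h').trans (h1.symm.trans h).symm)
          · exact hz1 (h2.symm.trans h').symm
        · exact hz2 (h1.symm.trans h).symm
    · have hstep : H.adjIn {Sum.inl iu, Sum.inl z} iu z :=
        hadjIn_simple _ iu z ee hnm hor (Or.inl rfl) (Or.inr rfl)
      intro a b ha hb
      have ha' : a = iu ∨ a = z := by
        rcases ha with h | h
        · injection h with h'; exact Or.inl h'
        · injection h with h'; exact Or.inr h'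
      have hb' : b = iu ∨ b = z := by
        rcases hb with h | h
        · injection h with h'; exact Or.inl h'
        · injection h with h'; exact Or.inr h'
      rcases ha' with rfl | rfl <;> rcases hb' with rfl | rfl
      · exact Relation.ReflTransGen.refl
      · exact Relation.ReflTransGen.single hstep
      · exact Relation.ReflTransGen.single (H.adjIn_symm hstep)
      · exact Relation.ReflTransGen.refl
    · rw [Set.ncard_pair (fun h => hzne (by injection h))]
      decide
  -- the quadruple elements
  have hquadAEM : ∀ (z iu : H.V) (ee : H.E), ¬ H.Multiple ee →
      ((H.fst ee = iu ∧ H.snd ee = z) ∨ (H.fst ee = z ∧ H.snd ee = iu)) →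
      (iu = v1 ∨ iu = v2) → z ≠ v1 → z ≠ v2 →
      H.AEvenMember yset {Sum.inl v1, Sum.inl v2, Sum.inl z, Sum.inr f0} := by
    intro z iu ee hnm hor hiu hz1 hz2
    have h1S : Sum.inl v1 ∈ ({Sum.inl v1, Sum.inl v2, Sum.inl z, Sum.inr f0} : Set H.El) :=
      Or.inl rfl
    have h2S : Sum.inl v2 ∈ ({Sum.inl v1, Sum.inl v2, Sum.inl z, Sum.inr f0} : Set H.El) :=
      Or.inr (Or.inl rfl)
    have hzS : Sum.inl z ∈ ({Sum.inl v1, Sum.inl v2, Sum.inl z, Sum.inr f0} : Set H.El) :=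
      Or.inr (Or.inr (Or.inl rfl))
    have hfS : Sum.inr f0 ∈ ({Sum.inl v1, Sum.inl v2, Sum.inl z, Sum.inr f0} : Set H.El) :=
      Or.inr (Or.inr (Or.inr rfl))
    refine hAEM _ ?_ ⟨?_, ?_⟩ ?_ ?_
    · rintro x (rfl | rfl | rfl | rfl)
      · exact hAall v1
      · exact hAall v2
      · exact hAall z
      · exact Or.inr (Or.inr (Or.inr (Or.inr (Or.inl rfl))))
    · rintro e (h | h | h | h)
      · exact nomatch h
      · exact nomatch h
      · exact nomatch h
      · injection h with h'
        subst h'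
        refine ⟨hmf0, ?_, ?_⟩
        · rcases hBH f0 hmf0 with ⟨ha, _⟩ | ⟨ha, _⟩
          · rw [ha]; exact h1S
          · rw [ha]; exact h2S
        · rcases hBH f0 hmf0 with ⟨_, hb⟩ | ⟨_, hb⟩
          · rw [hb]; exact h2S
          · rw [hb]; exact h1S
    · intro e hm _ _
      exact ⟨f0, hsameEnds_f0 e hm, hfS⟩
    · have h12 : H.adjIn {Sum.inl v1, Sum.inl v2, Sum.inl z, Sum.inr f0} v1 v2 :=
        hadjIn_f0 _ h1S h2S hfS
      have hziu : H.adjIn {Sum.inl v1, Sum.inl v2, Sum.inl z, Sum.inr f0} z iu := by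
        refine hadjIn_simple _ z iu ee hnm ?_ hzS ?_
        · rcases hor with ⟨ha, hb⟩ | ⟨ha, hb⟩
          · exact Or.inr ⟨ha, hb⟩
          · exact Or.inl ⟨ha, hb⟩
        · rcases hiu with rfl | rfl
          · exact h1S
          · exact h2S
      have hr1 : ∀ a : H.V,
          Sum.inl a ∈ ({Sum.inl v1, Sum.inl v2, Sum.inl z, Sum.inr f0} : Set H.El) →
          Relation.ReflTransGen
            (H.adjIn {Sum.inl v1, Sum.inl v2, Sum.inl z, Sum.inr f0}) v1 a := by
        intro a ha
        have ha' : a = v1 ∨ a = v2 ∨ a = z := by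
          rcases ha with h | h | h | h
          · injection h with h'; exact Or.inl h'
          · injection h with h'; exact Or.inr (Or.inl h')
          · injection h with h'; exact Or.inr (Or.inr h')
          · exact nomatch h
        rcases ha' with rfl | rfl | rfl
        · exact Relation.ReflTransGen.refl
        · exact Relation.ReflTransGen.single h12
        · rcases hiu with rfl | rfl
          · exact Relation.ReflTransGen.single (H.adjIn_symm hziu)
          · exact (Relation.ReflTransGen.single h12).tail (H.adjIn_symm hziu)
      intro a b ha hb
      exact (H.rtg_adjIn_symm (hr1 a ha)).trans (hr1 b hb)
    · rw [Set.ncard_insert_of_notMem (by simp [hv12, Ne.symm hz1]) (Set.toFinite _),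
          Set.ncard_insert_of_notMem (by simp [Ne.symm hz2]) (Set.toFinite _),
          Set.ncard_insert_of_notMem (by simp) (Set.toFinite _),
          Set.ncard_singleton]
      decide
  -- yset is itself A-even
  have hyAEM : H.AEvenMember yset yset := by
    refine hAEM yset subset_rfl ⟨?_, ?_⟩ ?_ (by rw [hy6]; decide)
    · intro e he
      rcases hyedges e he with rfl | rfl
      · refine ⟨hmf0, hAall _, hAall _⟩
      · refine ⟨hmf1, hAall _, hAall _⟩
    · intro e hm _ _
      exact ⟨f0, hsameEnds_f0 e hm, Or.inr (Or.inr (Or.inr (Or.inr (Or.inl rfl))))⟩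
    · have h12 : H.adjIn yset v1 v2 :=
        hadjIn_f0 _ (hAall v1) (hAall v2) (Or.inr (Or.inr (Or.inr (Or.inr (Or.inl rfl)))))
      have h3 : H.adjIn yset v3 iw :=
        hadjIn_simple _ v3 iw eew heew_nm (by
          rcases heew_ends with ⟨ha, hb⟩ | ⟨ha, hb⟩
          · exact Or.inr ⟨ha, hb⟩
          · exact Or.inl ⟨ha, hb⟩) (hAall v3) (hAall iw)
      have h4 : H.adjIn yset v4 iw' :=
        hadjIn_simple _ v4 iw' eew' heew'_nm (by
          rcases heew'_ends with ⟨ha, hb⟩ | ⟨ha, hb⟩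
          · exact Or.inr ⟨ha, hb⟩
          · exact Or.inl ⟨ha, hb⟩) (hAall v4) (hAall iw')
      have hr1 : ∀ a : H.V, Relation.ReflTransGen (H.adjIn yset) v1 a := by
        rintro ⟨x, hx⟩
        have hr2 : Relation.ReflTransGen (H.adjIn yset) v1 v2 :=
          Relation.ReflTransGen.single h12
        rcases hx with rfl | rfl | rfl | rfl
        · exact Relation.ReflTransGen.refl
        · exact hr2
        · rcases hiw_or with h | h
          · rw [h] at h3
            exact Relation.ReflTransGen.single (H.adjIn_symm h3)
          · rw [h] at h3
            exact hr2.tail (H.adjIn_symm h3)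
        · rcases hiw'_or with h | h
          · rw [h] at h4
            exact Relation.ReflTransGen.single (H.adjIn_symm h4)
          · rw [h] at h4
            exact hr2.tail (H.adjIn_symm h4)
      intro a b _ _
      exact (H.rtg_adjIn_symm (hr1 a)).trans (hr1 b)
  -- the poset elements
  have hle : ∀ a b : EvenPoset H yset, a ≤ b ↔ a.1 ⊆ b.1 := fun _ _ => Iff.rfl
  let yel : EvenPoset H yset := ⟨yset, Or.inr (Or.inr hyAEM)⟩
  let aU : EvenPoset H yset := ⟨{Sum.inl iw, Sum.inl v3},
    Or.inr (Or.inr (hpairAEM v3 iw eew heew_nm heew_ends hiw_or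
      (Ne.symm hv13) (Ne.symm hv23)))⟩
  let bU : EvenPoset H yset := ⟨{Sum.inl v1, Sum.inl v2, Sum.inl v3, Sum.inr f0},
    Or.inr (Or.inr (hquadAEM v3 iw eew heew_nm heew_ends hiw_or
      (Ne.symm hv13) (Ne.symm hv23)))⟩
  let aW : EvenPoset H yset := ⟨{Sum.inl iw', Sum.inl v4},
    Or.inr (Or.inr (hpairAEM v4 iw' eew' heew'_nm heew'_ends hiw'_or
      (Ne.symm hv14) (Ne.symm hv24)))⟩
  let bW : EvenPoset H yset := ⟨{Sum.inl v1, Sum.inl v2, Sum.inl v4, Sum.inr f0},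
    Or.inr (Or.inr (hquadAEM v4 iw' eew' heew'_nm heew'_ends hiw'_or
      (Ne.symm hv14) (Ne.symm hv24)))⟩
  have hbotlt : ∀ (Z : EvenPoset H yset) (x : H.El), x ∈ Z.1 → ⊥ < Z := by
    intro Z x hx
    refine lt_of_le_of_ne bot_le (fun h => ?_)
    have h' : Z.1 = (∅ : Set H.El) := congrArg Subtype.val h.symm
    rw [h'] at hx
    exact hx
  have hltab : ∀ (Z Z' : EvenPoset H yset) (x : H.El),
      Z.1 ⊆ Z'.1 → x ∈ Z'.1 → x ∉ Z.1 → Z < Z' := by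
    intro Z Z' x hsub hx hnx
    refine lt_of_le_of_ne ((hle _ _).2 hsub) (fun h => hnx ?_)
    have h' : Z.1 = Z'.1 := congrArg Subtype.val h
    rw [h']
    exact hx
  -- the side predicate
  set Wsd : EvenPoset H yset → Prop := fun Z => Sum.inl v4 ∈ Z.1 with hWsddef
  -- facts needed for the crux
  have htopsub : yset ⊆ H.topSet := by
    intro x hx e hxe
    subst hxe
    rcases hyedges e hx with rfl | rfl
    · exact hmf0
    · exact hmf1
  have hAEofZ : ∀ Z : EvenPoset H yset, ⊥ < Z → Z < yel →
      H.AEvenMember yset Z.1 ∧ Z.1 ⊆ yset ∧ Z.1 ≠ yset := by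
    intro Z hZb hZy
    have hZne0 : Z.1 ≠ (∅ : Set H.El) := by
      intro h
      exact (bot_lt_iff_ne_bot.1 hZb) (Subtype.ext h)
    have hsub : Z.1 ⊆ yset := (hle _ _).1 (le_of_lt hZy)
    have hne : Z.1 ≠ yset := fun h => (ne_of_lt hZy) (Subtype.ext h)
    rcases Z.2 with h | h | h
    · exact absurd h hZne0
    · exfalso
      apply hne
      refine subset_antisymm hsub ?_
      rw [h]
      exact htopsub
    · exact ⟨h, hsub, hne⟩
  have hEvenOf : ∀ (S : Set H.El), S ⊆ yset → H.AEvenMember yset S → Even S.ncard := by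
    intro S hsub hae
    refine H.even_total S.ncard S rfl hae.1 (fun v hv => ?_)
    have h2 := hae.2 v hv
    rwa [Set.inter_eq_self_of_subset_left ((H.componentIn_subset hv).trans hsub)] at h2
  -- the incomparability of the two sides
  have hincomp : ∀ Z Z' : EvenPoset H yset, ⊥ < Z → Z < yel → ⊥ < Z' → Z' < yel →
      ¬ Wsd Z → Wsd Z' → ¬ (Z ≤ Z') ∧ ¬ (Z' ≤ Z) := by
    intro Z Z' hZb hZy hZ'b hZ'y hnW hWm
    refine ⟨?_, fun hle' => hnW (((hle _ _).1 hle') hWm)⟩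
    intro hleZZ'
    have hsub := (hle _ _).1 hleZZ'
    obtain ⟨hZAE, hZsub, _⟩ := hAEofZ Z hZb hZy
    obtain ⟨hZ'AE, hZ'sub, hZ'ne⟩ := hAEofZ Z' hZ'b hZ'y
    have hZne0 : Z.1 ≠ (∅ : Set H.El) := by
      intro h
      exact (bot_lt_iff_ne_bot.1 hZb) (Subtype.ext h)
    have h0 : 0 < Z.1.ncard :=
      (Set.ncard_pos (Set.toFinite _)).2 (Set.nonempty_iff_ne_empty.2 hZne0)
    have hnn' : Z.1.ncard < Z'.1.ncard :=
      Set.ncard_lt_ncard ⟨hsub, fun hrev => hnW (hrev hWm)⟩ (Set.toFinite _)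
    have hn'6 : Z'.1.ncard < 6 := by
      rw [← hy6]
      exact Set.ncard_lt_ncard ⟨hZ'sub, fun h => hZ'ne (subset_antisymm hZ'sub h)⟩
        (Set.toFinite _)
    obtain ⟨p, hp⟩ := hEvenOf Z.1 hZsub hZAE
    obtain ⟨q, hq⟩ := hEvenOf Z'.1 hZ'sub hZ'AE
    have hn2 : Z.1.ncard = 2 := by omega
    have hn'4 : Z'.1.ncard = 4 := by omega
    by_cases hedge : ∃ x : H.E, Sum.inr x ∈ Z'.1
    · obtain ⟨x, hx⟩ := hedge
      obtain ⟨hxm, hxf, hxs⟩ := hZ'AE.1.1 x hx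
      have h1Z' : Sum.inl v1 ∈ Z'.1 ∧ Sum.inl v2 ∈ Z'.1 := by
        rcases hBH x hxm with ⟨ha, hb⟩ | ⟨ha, hb⟩
        · exact ⟨ha ▸ hxf, hb ▸ hxs⟩
        · exact ⟨hb ▸ hxs, ha ▸ hxf⟩
      have hT4sub : ({Sum.inl v1, Sum.inl v2, Sum.inl v4, Sum.inr x} : Set H.El) ⊆ Z'.1 := by
        rintro t (rfl | rfl | rfl | rfl)
        · exact h1Z'.1
        · exact h1Z'.2
        · exact hWm
        · exact hx
      have hT4card : ({Sum.inl v1, Sum.inl v2, Sum.inl v4, Sum.inr x} : Set H.El).ncard = 4 := by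
        rw [Set.ncard_insert_of_notMem (by simp [hv12, hv14]) (Set.toFinite _),
            Set.ncard_insert_of_notMem (by simp [hv24]) (Set.toFinite _),
            Set.ncard_insert_of_notMem (by simp) (Set.toFinite _),
            Set.ncard_singleton]
      have hZ'eq : Z'.1 = {Sum.inl v1, Sum.inl v2, Sum.inl v4, Sum.inr x} :=
        (Set.eq_of_subset_of_ncard_le hT4sub (by omega) (Set.toFinite _)).symm
      by_cases hxZ : Sum.inr x ∈ Z.1
      · obtain ⟨hxm2, hxf2, hxs2⟩ := hZAE.1.1 x hxZ
        have h1Z : Sum.inl v1 ∈ Z.1 ∧ Sum.inl v2 ∈ Z.1 := by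
          rcases hBH x hxm2 with ⟨ha, hb⟩ | ⟨ha, hb⟩
          · exact ⟨ha ▸ hxf2, hb ▸ hxs2⟩
          · exact ⟨hb ▸ hxs2, ha ▸ hxf2⟩
        have hT3sub : ({Sum.inl v1, Sum.inl v2, Sum.inr x} : Set H.El) ⊆ Z.1 := by
          rintro t (rfl | rfl | rfl)
          · exact h1Z.1
          · exact h1Z.2
          · exact hxZ
        have hT3card : ({Sum.inl v1, Sum.inl v2, Sum.inr x} : Set H.El).ncard = 3 := by
          rw [Set.ncard_insert_of_notMem (by simp [hv12]) (Set.toFinite _),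
              Set.ncard_insert_of_notMem (by simp) (Set.toFinite _),
              Set.ncard_singleton]
        have := Set.ncard_le_ncard hT3sub (Set.toFinite _)
        omega
      · have hZsub2 : Z.1 ⊆ ({Sum.inl v1, Sum.inl v2} : Set H.El) := by
          intro t ht
          have ht' := hsub ht
          rw [hZ'eq] at ht'
          rcases ht' with rfl | rfl | rfl | rfl
          · exact Or.inl rfl
          · exact Or.inr rfl
          · exact absurd ht hnW
          · exact absurd ht hxZ
        have hpcard : ({Sum.inl v1, Sum.inl v2} : Set H.El).ncard = 2 :=
          Set.ncard_pair (by simp [hv12])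
        have hZeq : Z.1 = {Sum.inl v1, Sum.inl v2} :=
          Set.eq_of_subset_of_ncard_le hZsub2 (by omega) (Set.toFinite _)
        have hf0f : Sum.inl (H.fst f0) ∈ Z.1 := by
          rw [hZeq]
          rcases hBH f0 hmf0 with ⟨ha, _⟩ | ⟨ha, _⟩
          · rw [ha]; exact Or.inl rfl
          · rw [ha]; exact Or.inr rfl
        have hf0s : Sum.inl (H.snd f0) ∈ Z.1 := by
          rw [hZeq]
          rcases hBH f0 hmf0 with ⟨_, hb⟩ | ⟨_, hb⟩
          · rw [hb]; exact Or.inr rfl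
          · rw [hb]; exact Or.inl rfl
        obtain ⟨e', _, he'⟩ := hZAE.1.2 f0 hmf0 hf0f hf0s
        rw [hZeq] at he'
        rcases he' with h | h
        · exact nomatch h
        · exact nomatch h
    · push_neg at hedge
      by_cases h1 : Sum.inl v1 ∈ Z'.1
      · by_cases h2 : Sum.inl v2 ∈ Z'.1
        · have hf0f : Sum.inl (H.fst f0) ∈ Z'.1 := by
            rcases hBH f0 hmf0 with ⟨ha, _⟩ | ⟨ha, _⟩
            · rw [ha]; exact h1
            · rw [ha]; exact h2
          have hf0s : Sum.inl (H.snd f0) ∈ Z'.1 := by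
            rcases hBH f0 hmf0 with ⟨_, hb⟩ | ⟨_, hb⟩
            · rw [hb]; exact h2
            · rw [hb]; exact h1
          obtain ⟨e', _, he'⟩ := hZ'AE.1.2 f0 hmf0 hf0f hf0s
          exact hedge e' he'
        · have hsub3 : Z'.1 ⊆ ({Sum.inl v1, Sum.inl v3, Sum.inl v4} : Set H.El) := by
            intro t ht
            have ht' := hZ'sub ht
            rcases ht' with rfl | rfl | rfl | rfl | rfl | rfl
            · exact Or.inl rfl
            · exact absurd ht h2
            · exact Or.inr (Or.inl rfl)
            · exact Or.inr (Or.inr rfl)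
            · exact absurd ht (hedge f0)
            · exact absurd ht (hedge f1)
          have hT3card : ({Sum.inl v1, Sum.inl v3, Sum.inl v4} : Set H.El).ncard = 3 := by
            rw [Set.ncard_insert_of_notMem (by simp [hv13, hv14]) (Set.toFinite _),
                Set.ncard_insert_of_notMem (by simp [hv34]) (Set.toFinite _),
                Set.ncard_singleton]
          have := Set.ncard_le_ncard hsub3 (Set.toFinite _)
          omega
      · have hsub3 : Z'.1 ⊆ ({Sum.inl v2, Sum.inl v3, Sum.inl v4} : Set H.El) := by
          intro t ht
          have ht' := hZ'sub ht
          rcases ht' with rfl | rfl | rfl | rfl | rfl | rfl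
          · exact absurd ht h1
          · exact Or.inl rfl
          · exact Or.inr (Or.inl rfl)
          · exact Or.inr (Or.inr rfl)
          · exact absurd ht (hedge f0)
          · exact absurd ht (hedge f1)
        have hT3card : ({Sum.inl v2, Sum.inl v3, Sum.inl v4} : Set H.El).ncard = 3 := by
          rw [Set.ncard_insert_of_notMem (by simp [hv23, hv24]) (Set.toFinite _),
              Set.ncard_insert_of_notMem (by simp [hv34]) (Set.toFinite _),
              Set.ncard_singleton]
        have := Set.ncard_le_ncard hsub3 (Set.toFinite _)
        omega
  -- membership facts for the two chains
  have hiwbU : Sum.inl iw ∈ bU.1 := by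
    rcases hiw_or with rfl | rfl
    · exact Or.inl rfl
    · exact Or.inr (Or.inl rfl)
  have hiw'bW : Sum.inl iw' ∈ bW.1 := by
    rcases hiw'_or with rfl | rfl
    · exact Or.inl rfl
    · exact Or.inr (Or.inl rfl)
  have hv4naU : ¬ Wsd aU := by
    rintro (h | h)
    · injection h with h'
      rcases hiw_or with rfl | rfl
      · exact hv14 h'.symm
      · exact hv24 h'.symm
    · injection h with h'
      exact hv34 h'.symm
  have hv4nbU : ¬ Wsd bU := by
    rintro (h | h | h | h)
    · injection h with h'; exact hv14 h'.symm
    · injection h with h'; exact hv24 h'.symm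
    · injection h with h'; exact hv34 h'.symm
    · exact nomatch h
  have haUbU : aU < bU := by
    refine hltab _ _ (Sum.inr f0) ?_ (Or.inr (Or.inr (Or.inr rfl))) ?_
    · rintro t (rfl | rfl)
      · exact hiwbU
      · exact Or.inr (Or.inr (Or.inl rfl))
    · rintro (h | h) <;> exact nomatch h
  have haWbW : aW < bW := by
    refine hltab _ _ (Sum.inr f0) ?_ (Or.inr (Or.inr (Or.inr rfl))) ?_
    · rintro t (rfl | rfl)
      · exact hiw'bW
      · exact Or.inr (Or.inr (Or.inl rfl))
    · rintro (h | h) <;> exact nomatch h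
  have hbUy : bU < yel := by
    refine hltab _ _ (Sum.inl v4) ?_ (hAall v4) hv4nbU
    rintro t (rfl | rfl | rfl | rfl)
    · exact hAall v1
    · exact hAall v2
    · exact hAall v3
    · exact Or.inr (Or.inr (Or.inr (Or.inr (Or.inl rfl))))
  have hbWy : bW < yel := by
    refine hltab _ _ (Sum.inl v3) ?_ (hAall v3) ?_
    · rintro t (rfl | rfl | rfl | rfl)
      · exact hAall v1
      · exact hAall v2
      · exact hAall v4
      · exact Or.inr (Or.inr (Or.inr (Or.inr (Or.inl rfl))))
    · rintro (h | h | h | h)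
      · injection h with h'; exact hv13 h'.symm
      · injection h with h'; exact hv23 h'.symm
      · injection h with h'; exact hv34 h'
      · exact nomatch h
  -- apply the obstruction
  have hyb : (⊥ : EvenPoset H yset) < yel := hbotlt yel (Sum.inl v1) (hAall v1)
  have hobs := poset_obstruction (P := EvenPoset H yset) yel hyb Wsd hincomp
    ⟨aU, bU, hbotlt aU (Sum.inl v3) (Or.inr rfl), haUbU, hbUy, hv4naU, hv4nbU⟩
    ⟨aW, bW, hbotlt aW (Sum.inl v4) (Or.inr rfl), haWbW, hbWy, Or.inr rfl,
      Or.inr (Or.inr (Or.inl rfl))⟩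
  exact hobs (hG spec yset hAdm)
end
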